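/- arXiv:2510.01771 — 5 statements merged into one kernel-verified Lean document; each statement's English description precedes it below -/
import Mathlib

section
/- Let n_1,…,n_J be positive integers, N = n_1+⋯+n_J, and m a positive integer. Let C ∈ ℝ^{N×N} be symmetric positive definite, partitioned into blocks C_{ij} ∈ ℝ^{n_i×n_j}. Let C* ∈ ℝ^{m×m} be symmetric positive definite, let U_i ∈ ℝ^{n_i×m} for i=1,…,J, let U ∈ ℝ^{N×m} be the matrix stacking U_1,…,U_J vertically, and set C̃_{ij} := U_i (C*)^{-1} U_jᵀ. Assume C − U (C*)^{-1} Uᵀ is positive semidefinite and each R_i := C_{ii} − C̃_{ii} is positive definite. Define C_1 ∈ ℝ^{N×N} by (C_1)_{ii} = C_{ii} and (C_1)_{ij} = C̃_{ij} for i ≠ j, and define C_2 := blockdiag(C_{11},…,C_{JJ}). For a symmetric positive definite Σ ∈ ℝ^{N×N} define D(Σ) := (1/2)(tr(Σ^{-1} C) − N + log det Σ − log det C). Then (1/N)·D(C_1) ≤ (1/N)·D(C_2) + m/N. -/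
open Matrix


lemma KLAux.diag_nonneg {ι : Type*} [Fintype ι] [DecidableEq ι]
    {A : Matrix ι ι ℝ} (hA : A.PosSemidef) (i : ι) : 0 ≤ A i i := by
  have h := hA.dotProduct_mulVec_nonneg (Pi.single i 1)
  simpa [dotProduct, mulVec, Pi.single_apply, Finset.sum_ite_eq', mul_comm] using h

lemma KLAux.trace_nonneg {ι : Type*} [Fintype ι] [DecidableEq ι]
    {A : Matrix ι ι ℝ} (hA : A.PosSemidef) : 0 ≤ A.trace := by
  exact Finset.sum_nonneg fun i _ => KLAux.diag_nonneg hA i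

open scoped MatrixOrder in
lemma KLAux.trace_mul_nonneg {ι : Type*} [Fintype ι] [DecidableEq ι]
    {A B : Matrix ι ι ℝ} (hA : A.PosSemidef) (hB : B.PosSemidef) :
    0 ≤ (A * B).trace := by
  have h1 : A = CFC.sqrt A * CFC.sqrt A := (CFC.sqrt_mul_sqrt_self A hA.nonneg).symm
  have h2 : (A * B).trace = (CFC.sqrt A * B * CFC.sqrt A).trace := by
    conv_lhs => rw [h1, Matrix.mul_assoc, trace_mul_comm]
  rw [h2]
  have h3 : (CFC.sqrt A * B * CFC.sqrt A).PosSemidef := by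
    have := hB.conjTranspose_mul_mul_same (CFC.sqrt A)
    rwa [(CFC.sqrt_nonneg A).posSemidef.isHermitian.eq] at this
  exact KLAux.trace_nonneg h3

lemma KLAux.log_det_le {ι : Type*} [Fintype ι] [DecidableEq ι]
    {A : Matrix ι ι ℝ} (hA : A.PosDef) :
    Real.log A.det ≤ A.trace - Fintype.card ι := by
  have hH := hA.isHermitian
  have hev : ∀ i, 0 < hH.eigenvalues i := hA.eigenvalues_pos
  have hdet : A.det = ∏ i, hH.eigenvalues i := by
    simpa using hH.det_eq_prod_eigenvalues
  have htr : A.trace = ∑ i, hH.eigenvalues i := by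
    have V2 := (Matrix.mem_unitaryGroup_iff).mp (hH.eigenvectorUnitary).2
    calc A.trace = ((hH.eigenvectorUnitary : Matrix ι ι ℝ) *
          diagonal (RCLike.ofReal ∘ hH.eigenvalues) *
          (star (hH.eigenvectorUnitary : Matrix ι ι ℝ))).trace := by
            exact congrArg Matrix.trace hH.spectral_theorem
      _ = ∑ i, hH.eigenvalues i := by
        rw [trace_mul_comm, ← Matrix.mul_assoc]
        have : (star (hH.eigenvectorUnitary : Matrix ι ι ℝ)) *
            (hH.eigenvectorUnitary : Matrix ι ι ℝ) = 1 := by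
          exact (Matrix.mem_unitaryGroup_iff').mp (hH.eigenvectorUnitary).2
        rw [this, Matrix.one_mul, trace_diagonal]
        simp
  rw [hdet, htr, Real.log_prod (fun i _ => (hev i).ne')]
  have : ∀ i ∈ Finset.univ, Real.log (hH.eigenvalues i) ≤ hH.eigenvalues i - 1 :=
    fun i _ => Real.log_le_sub_one_of_pos (hev i)
  calc ∑ i, Real.log (hH.eigenvalues i) ≤ ∑ i, (hH.eigenvalues i - 1) :=
        Finset.sum_le_sum this
    _ = (∑ i, hH.eigenvalues i) - Fintype.card ι := by
        rw [Finset.sum_sub_distrib]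
        simp [Finset.card_univ]

section

variable {J : ℕ} {n : Fin J → ℕ}

lemma KLAux.mulVec_blockDiagonal'
    (B : ∀ i : Fin J, Matrix (Fin (n i)) (Fin (n i)) ℝ) (x : ((i : Fin J) × Fin (n i)) → ℝ)
    (i : Fin J) (k : Fin (n i)) :
    (blockDiagonal' B *ᵥ x) ⟨i, k⟩ = (B i *ᵥ fun l => x ⟨i, l⟩) k := by
  unfold Matrix.mulVec dotProduct
  rw [← Finset.univ_sigma_univ, Finset.sum_sigma]
  rw [Finset.sum_eq_single_of_mem i (Finset.mem_univ i)]
  · simp [Matrix.blockDiagonal'_apply_eq]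
  · intro j _ hji
    apply Finset.sum_eq_zero
    intro l _
    show blockDiagonal' B ⟨i, k⟩ ⟨j, l⟩ * x ⟨j, l⟩ = 0
    rw [Matrix.blockDiagonal'_apply_ne _ _ _ (Ne.symm hji), zero_mul]

lemma KLAux.posDef_blockDiagonal'
    {B : ∀ i : Fin J, Matrix (Fin (n i)) (Fin (n i)) ℝ} (hB : ∀ i, (B i).PosDef) :
    (blockDiagonal' B).PosDef := by
  rw [Matrix.posDef_iff_dotProduct_mulVec]
  constructor
  · show (blockDiagonal' B)ᴴ = blockDiagonal' B
    rw [Matrix.blockDiagonal'_conjTranspose]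
    have h : (fun i => (B i)ᴴ) = B := funext fun i => (hB i).isHermitian.eq
    rw [h]
  · intro x hx
    have key : dotProduct (star x) (blockDiagonal' B *ᵥ x)
        = ∑ i, dotProduct (star fun l => x ⟨i, l⟩) (B i *ᵥ fun l => x ⟨i, l⟩) := by
      unfold dotProduct
      rw [← Finset.univ_sigma_univ, Finset.sum_sigma]
      refine Finset.sum_congr rfl fun i _ => Finset.sum_congr rfl fun k _ => ?_
      rw [KLAux.mulVec_blockDiagonal']
      rfl
    rw [key]
    obtain ⟨p, hp⟩ : ∃ p, x p ≠ 0 := by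
      by_contra h
      push_neg at h
      exact hx (funext h)
    obtain ⟨i, k⟩ := p
    have hi : (fun l => x ⟨i, l⟩) ≠ 0 := fun h => hp (congrFun h k)
    refine Finset.sum_pos' (fun j _ => (hB j).posSemidef.dotProduct_mulVec_nonneg _) ⟨i, Finset.mem_univ i, ?_⟩
    exact (hB i).dotProduct_mulVec_pos hi

lemma KLAux.inv_blockDiagonal'
    {B : ∀ i : Fin J, Matrix (Fin (n i)) (Fin (n i)) ℝ} (hB : ∀ i, (B i).PosDef) :
    (blockDiagonal' B)⁻¹ = blockDiagonal' fun i => (B i)⁻¹ := by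
  apply Matrix.inv_eq_right_inv
  rw [← Matrix.blockDiagonal'_mul]
  have : (fun i => B i * (B i)⁻¹) = fun _ => 1 := by
    funext i
    exact Matrix.mul_nonsing_inv _ (Matrix.isUnit_iff_isUnit_det _ |>.mp (hB i).isUnit)
  calc blockDiagonal' (fun i => B i * (B i)⁻¹) = blockDiagonal' (fun _ => 1) := by rw [this]
    _ = 1 := Matrix.blockDiagonal'_one

lemma KLAux.trace_mul_eq_zero
    (A E : Matrix ((i : Fin J) × Fin (n i)) ((i : Fin J) × Fin (n i)) ℝ)
    (hA : ∀ p q : (i : Fin J) × Fin (n i), p.1 ≠ q.1 → A p q = 0)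
    (hE : ∀ (i : Fin J) (k l : Fin (n i)), E ⟨i, k⟩ ⟨i, l⟩ = 0) :
    (A * E).trace = 0 := by
  unfold Matrix.trace Matrix.diag
  apply Finset.sum_eq_zero
  intro p _
  rw [Matrix.mul_apply]
  apply Finset.sum_eq_zero
  intro q _
  obtain ⟨i, k⟩ := p
  obtain ⟨j, l⟩ := q
  by_cases h : i = j
  · subst h
    rw [hE i l k, mul_zero]
  · rw [hA _ _ h, zero_mul]

end
section

variable {ι κ : Type*} [Fintype ι] [Fintype κ] [DecidableEq ι] [DecidableEq κ]

lemma KLAux.woodbury (R : Matrix ι ι ℝ) (Cs : Matrix κ κ ℝ) (U : Matrix ι κ ℝ)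
    (hR : R.PosDef) (hCs : Cs.PosDef) (hM : (Cs + Uᵀ * R⁻¹ * U).PosDef) :
    (R + U * Cs⁻¹ * Uᵀ)⁻¹ =
      R⁻¹ - R⁻¹ * U * (Cs + Uᵀ * R⁻¹ * U)⁻¹ * (Uᵀ * R⁻¹) := by
  set M := Cs + Uᵀ * R⁻¹ * U with hMdef
  have e1 : R * R⁻¹ = 1 := Matrix.mul_nonsing_inv _ ((Matrix.isUnit_iff_isUnit_det _).mp hR.isUnit)
  have e2 : Cs⁻¹ * Cs = 1 :=
    Matrix.nonsing_inv_mul _ ((Matrix.isUnit_iff_isUnit_det _).mp hCs.isUnit)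
  have e3 : M * M⁻¹ = 1 := Matrix.mul_nonsing_inv _ ((Matrix.isUnit_iff_isUnit_det _).mp hM.isUnit)
  apply Matrix.inv_eq_right_inv
  have key1 : Cs⁻¹ * (Uᵀ * R⁻¹ * U) = Cs⁻¹ * M - 1 := by
    rw [hMdef, Matrix.mul_add, e2]; abel
  have key2 : Cs⁻¹ * (Uᵀ * R⁻¹ * U) * M⁻¹ = Cs⁻¹ - M⁻¹ := by
    rw [key1, Matrix.sub_mul, Matrix.mul_assoc, e3, Matrix.mul_one, Matrix.one_mul]
  have r1 : ∀ X : Matrix ι ι ℝ, R * (R⁻¹ * X) = X := fun X => by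
    rw [← Matrix.mul_assoc, e1, Matrix.one_mul]
  have r2 : ∀ Z : Matrix κ ι ℝ, Cs⁻¹ * (Uᵀ * (R⁻¹ * (U * (M⁻¹ * Z)))) = Cs⁻¹ * Z - M⁻¹ * Z := by
    intro Z
    have h := congrArg (fun A => A * Z) key2
    simp only [Matrix.sub_mul, Matrix.mul_assoc] at h
    exact h

  simp only [Matrix.add_mul, Matrix.mul_sub, Matrix.mul_assoc, r1, r2, e1, Matrix.mul_sub]
  abel

lemma KLAux.sandwich (R : Matrix ι ι ℝ) (Cs : Matrix κ κ ℝ) (U : Matrix ι κ ℝ)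
    (hR : R.PosDef) (hCs : Cs.PosDef) (hM : (Cs + Uᵀ * R⁻¹ * U).PosDef) :
    Uᵀ * (R + U * Cs⁻¹ * Uᵀ)⁻¹ * U =
      Cs - Cs * (Cs + Uᵀ * R⁻¹ * U)⁻¹ * Cs := by
  rw [KLAux.woodbury R Cs U hR hCs hM]
  set M := Cs + Uᵀ * R⁻¹ * U with hMdef
  set W := Uᵀ * R⁻¹ * U with hWdef
  have e3 : M * M⁻¹ = 1 := Matrix.mul_nonsing_inv _ ((Matrix.isUnit_iff_isUnit_det _).mp hM.isUnit)
  have e3' : M⁻¹ * M = 1 :=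
    Matrix.nonsing_inv_mul _ ((Matrix.isUnit_iff_isUnit_det _).mp hM.isUnit)
  have lhs : Uᵀ * (R⁻¹ - R⁻¹ * U * M⁻¹ * (Uᵀ * R⁻¹)) * U = W - W * M⁻¹ * W := by
    simp only [Matrix.mul_sub, Matrix.sub_mul, hWdef, Matrix.mul_assoc]
  rw [lhs]
  have hW : W = M - Cs := by rw [hMdef]; abel
  rw [hW]
  have step1 : (M - Cs) * M⁻¹ = 1 - Cs * M⁻¹ := by
    rw [Matrix.sub_mul, e3]
  have step2 : (1 - Cs * M⁻¹) * (M - Cs) = M - Cs - Cs + Cs * M⁻¹ * Cs := by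
    rw [Matrix.sub_mul, Matrix.one_mul, Matrix.mul_sub, Matrix.mul_assoc Cs M⁻¹ M, e3',
      Matrix.mul_one]
    abel
  calc M - Cs - (M - Cs) * M⁻¹ * (M - Cs)
      = M - Cs - (1 - Cs * M⁻¹) * (M - Cs) := by rw [step1]
    _ = M - Cs - (M - Cs - Cs + Cs * M⁻¹ * Cs) := by rw [step2]
    _ = Cs - Cs * M⁻¹ * Cs := by abel

end

lemma KLAux.log_det_le' {ι : Type*} [Fintype ι] [DecidableEq ι]
    {A : Matrix ι ι ℝ} (hA : A.PosSemidef) (hdet : 0 < A.det) :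
    Real.log A.det ≤ A.trace - Fintype.card ι := by
  have hH := hA.isHermitian
  have hnn : ∀ i, 0 ≤ hH.eigenvalues i := hA.eigenvalues_nonneg
  have hdet' : A.det = ∏ i, hH.eigenvalues i := by
    simpa using hH.det_eq_prod_eigenvalues
  have hev : ∀ i, 0 < hH.eigenvalues i := by
    intro i
    rcases (hnn i).lt_or_eq with h | h
    · exact h
    · exfalso
      have : A.det = 0 := by
        rw [hdet']
        exact Finset.prod_eq_zero (Finset.mem_univ i) h.symm
      rw [this] at hdet
      exact lt_irrefl 0 hdet
  have htr : A.trace = ∑ i, hH.eigenvalues i := by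
    have V2 := (Matrix.mem_unitaryGroup_iff).mp (hH.eigenvectorUnitary).2
    calc A.trace = ((hH.eigenvectorUnitary : Matrix ι ι ℝ) *
          diagonal (RCLike.ofReal ∘ hH.eigenvalues) *
          (star (hH.eigenvectorUnitary : Matrix ι ι ℝ))).trace := by
            exact congrArg Matrix.trace hH.spectral_theorem
      _ = ∑ i, hH.eigenvalues i := by
        rw [trace_mul_comm, ← Matrix.mul_assoc]
        have : (star (hH.eigenvectorUnitary : Matrix ι ι ℝ)) *
            (hH.eigenvectorUnitary : Matrix ι ι ℝ) = 1 := by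
          exact (Matrix.mem_unitaryGroup_iff').mp (hH.eigenvectorUnitary).2
        rw [this, Matrix.one_mul, trace_diagonal]
        simp
  rw [hdet', htr, Real.log_prod (fun i _ => (hev i).ne')]
  calc ∑ i, Real.log (hH.eigenvalues i) ≤ ∑ i, (hH.eigenvalues i - 1) :=
        Finset.sum_le_sum fun i _ => Real.log_le_sub_one_of_pos (hev i)
    _ = (∑ i, hH.eigenvalues i) - Fintype.card ι := by
        rw [Finset.sum_sub_distrib]
        simp [Finset.card_univ]

open scoped MatrixOrder in
lemma KLAux.log_det_le_log_det {ι : Type*} [Fintype ι] [DecidableEq ι]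
    {A B : Matrix ι ι ℝ} (hA : A.PosDef) (hB : B.PosDef)
    (htr : (B⁻¹ * A).trace = Fintype.card ι) :
    Real.log A.det ≤ Real.log B.det := by
  have hBi : (B⁻¹).PosDef := hB.inv
  set S := CFC.sqrt B⁻¹ with hSdef
  have hS : S.PosSemidef := (CFC.sqrt_nonneg B⁻¹).posSemidef
  have hSS : S * S = B⁻¹ := CFC.sqrt_mul_sqrt_self B⁻¹ hBi.posSemidef.nonneg
  have hXPSD : (S * A * S).PosSemidef := by
    have := hA.posSemidef.conjTranspose_mul_mul_same S
    rwa [hS.isHermitian.eq] at this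
  have hdetS2 : S.det * S.det = B⁻¹.det := by rw [← Matrix.det_mul, hSS]
  have hdetBi : 0 < B⁻¹.det := hBi.det_pos
  have hdetX : (S * A * S).det = B⁻¹.det * A.det := by
    rw [Matrix.det_mul, Matrix.det_mul, ← hdetS2]; ring
  have hXdet : 0 < (S * A * S).det := by
    rw [hdetX]; exact mul_pos hdetBi hA.det_pos
  have htrX : (S * A * S).trace = (B⁻¹ * A).trace := by
    rw [trace_mul_comm, ← Matrix.mul_assoc, hSS]
  have core := KLAux.log_det_le' hXPSD hXdet
  rw [hdetX, htrX, htr, Real.log_mul hdetBi.ne' hA.det_pos.ne',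
    Matrix.det_nonsing_inv, Ring.inverse_eq_inv, Real.log_inv] at core
  linarith


/-- Proposition 1 in explicit matrix form: the dimension-normalized Gaussian KL divergence
`D(Σ)/N`, with `D(Σ) = ½(tr(Σ⁻¹C) − N + log det Σ − log det C)`, satisfies
`D(C₁)/N ≤ D(C₂)/N + m/N`, where `C₁` is the covariance of the low-rank model with full local
covariance and `C₂ = blockdiag(C₁₁,…,C_JJ)` is that of the independence model. -/
theorem kl_lowrank_le_kl_independent
    {J m : ℕ} (hJ : 0 < J) (hm : 0 < m) (n : Fin J → ℕ) (hn : ∀ i, 0 < n i)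
    (N : ℕ) (hN : N = ∑ i, n i)
    (C : Matrix ((i : Fin J) × Fin (n i)) ((i : Fin J) × Fin (n i)) ℝ)
    (hC : C.PosDef)
    (Cstar : Matrix (Fin m) (Fin m) ℝ) (hCstar : Cstar.PosDef)
    (Ui : (i : Fin J) → Matrix (Fin (n i)) (Fin m) ℝ)
    (U : Matrix ((i : Fin J) × Fin (n i)) (Fin m) ℝ)
    (hU : ∀ (i : Fin J) (k : Fin (n i)) (j : Fin m), U ⟨i, k⟩ j = Ui i k j)
    (hPSD : (C - U * Cstar⁻¹ * Uᵀ).PosSemidef)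
    (hRi : ∀ i : Fin J,
      (Matrix.of fun k l : Fin (n i) =>
        C ⟨i, k⟩ ⟨i, l⟩ - (Ui i * Cstar⁻¹ * (Ui i)ᵀ) k l).PosDef)
    (C₁ C₂ : Matrix ((i : Fin J) × Fin (n i)) ((i : Fin J) × Fin (n i)) ℝ)
    (hC₁diag : ∀ (i : Fin J) (k l : Fin (n i)), C₁ ⟨i, k⟩ ⟨i, l⟩ = C ⟨i, k⟩ ⟨i, l⟩)
    (hC₁off : ∀ p q : (i : Fin J) × Fin (n i), p.1 ≠ q.1 → C₁ p q = (U * Cstar⁻¹ * Uᵀ) p q)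
    (hC₂diag : ∀ (i : Fin J) (k l : Fin (n i)), C₂ ⟨i, k⟩ ⟨i, l⟩ = C ⟨i, k⟩ ⟨i, l⟩)
    (hC₂off : ∀ p q : (i : Fin J) × Fin (n i), p.1 ≠ q.1 → C₂ p q = 0)
    (D : Matrix ((i : Fin J) × Fin (n i)) ((i : Fin J) × Fin (n i)) ℝ → ℝ)
    (hD : ∀ S : Matrix ((i : Fin J) × Fin (n i)) ((i : Fin J) × Fin (n i)) ℝ,
      D S = 1 / 2 * ((S⁻¹ * C).trace - (N : ℝ) + Real.log S.det - Real.log C.det)) :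
    1 / (N : ℝ) * D C₁ ≤ 1 / (N : ℝ) * D C₂ + (m : ℝ) / (N : ℝ) := by
  classical
  haveI : Nonempty (Fin J) := ⟨⟨0, hJ⟩⟩
  have hNpos : 0 < N := by
    rw [hN]; exact Finset.sum_pos (fun i _ => hn i) Finset.univ_nonempty
  have hcard : ((Fintype.card ((i : Fin J) × Fin (n i)) : ℕ) : ℝ) = (N : ℝ) := by
    rw [hN]; simp [Fintype.card_sigma]
  set Ct : Matrix ((i : Fin J) × Fin (n i)) ((i : Fin J) × Fin (n i)) ℝ :=
    U * Cstar⁻¹ * Uᵀ with hCtdef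
  set Rb : ∀ i : Fin J, Matrix (Fin (n i)) (Fin (n i)) ℝ :=
    fun i => Matrix.of fun k l => C ⟨i, k⟩ ⟨i, l⟩ - (Ui i * Cstar⁻¹ * (Ui i)ᵀ) k l with hRbdef
  set R : Matrix ((i : Fin J) × Fin (n i)) ((i : Fin J) × Fin (n i)) ℝ :=
    blockDiagonal' Rb with hRdef
  have hRbPD : ∀ i, (Rb i).PosDef := fun i => hRi i
  have hRPD : R.PosDef := KLAux.posDef_blockDiagonal' hRbPD
  have hCtEntry : ∀ (i : Fin J) (k l : Fin (n i)),
      Ct ⟨i, k⟩ ⟨i, l⟩ = (Ui i * Cstar⁻¹ * (Ui i)ᵀ) k l := by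
    intro i k l
    simp only [hCtdef, Matrix.mul_apply, Matrix.transpose_apply, hU]
  have hRentry : ∀ (i : Fin J) (k l : Fin (n i)),
      R ⟨i, k⟩ ⟨i, l⟩ = C ⟨i, k⟩ ⟨i, l⟩ - (Ui i * Cstar⁻¹ * (Ui i)ᵀ) k l :=
    fun i k l => Matrix.blockDiagonal'_apply_eq Rb i k l
  have hC1 : C₁ = R + Ct := by
    ext ⟨i, k⟩ ⟨j, l⟩
    by_cases h : i = j
    · subst h
      rw [Matrix.add_apply, hC₁diag, hCtEntry, hRentry]
      ring
    · rw [Matrix.add_apply, hC₁off ⟨i, k⟩ ⟨j, l⟩ h, hRdef,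
        Matrix.blockDiagonal'_apply_ne Rb _ _ h, zero_add]
  have hCtPSD : Ct.PosSemidef := by
    rw [hCtdef]
    have h := (hCstar.inv.posSemidef).mul_mul_conjTranspose_same U
    rwa [Matrix.conjTranspose_eq_transpose_of_trivial] at h
  have hC₁PD : C₁.PosDef := by rw [hC1]; exact hRPD.add_posSemidef hCtPSD
  set Db : ∀ i : Fin J, Matrix (Fin (n i)) (Fin (n i)) ℝ :=
    fun i => Matrix.of fun k l => C ⟨i, k⟩ ⟨i, l⟩ with hDbdef
  have hDbPD : ∀ i, (Db i).PosDef := by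
    intro i
    have h1 : Db i = Rb i + Ui i * Cstar⁻¹ * (Ui i)ᵀ := by
      ext k l
      simp only [hDbdef, hRbdef, Matrix.add_apply, Matrix.of_apply]
      ring
    rw [h1]
    refine (hRbPD i).add_posSemidef ?_
    have h := (hCstar.inv.posSemidef).mul_mul_conjTranspose_same (Ui i)
    rwa [Matrix.conjTranspose_eq_transpose_of_trivial] at h
  have hC2 : C₂ = blockDiagonal' Db := by
    ext ⟨i, k⟩ ⟨j, l⟩
    by_cases h : i = j
    · subst h
      rw [hC₂diag, Matrix.blockDiagonal'_apply_eq]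
      simp [hDbdef]
    · rw [hC₂off ⟨i, k⟩ ⟨j, l⟩ h, Matrix.blockDiagonal'_apply_ne Db _ _ h]
  have hC₂PD : C₂.PosDef := by rw [hC2]; exact KLAux.posDef_blockDiagonal' hDbPD
  have hC₂invOff : ∀ p q : (i : Fin J) × Fin (n i), p.1 ≠ q.1 → C₂⁻¹ p q = 0 := by
    intro p q h
    rw [hC2, KLAux.inv_blockDiagonal' hDbPD]
    obtain ⟨i, k⟩ := p; obtain ⟨j, l⟩ := q
    exact Matrix.blockDiagonal'_apply_ne _ _ _ h
  have e2 : C₂⁻¹ * C₂ = 1 :=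
    Matrix.nonsing_inv_mul _ ((Matrix.isUnit_iff_isUnit_det _).mp hC₂PD.isUnit)
  have htr1 : (1 : Matrix ((i : Fin J) × Fin (n i)) ((i : Fin J) × Fin (n i)) ℝ).trace
      = (N : ℝ) := by
    rw [Matrix.trace_one]; exact hcard
  have diagsub : ∀ X : Matrix ((i : Fin J) × Fin (n i)) ((i : Fin J) × Fin (n i)) ℝ,
      (∀ (i : Fin J) (k l : Fin (n i)), X ⟨i, k⟩ ⟨i, l⟩ = C ⟨i, k⟩ ⟨i, l⟩) →
      (C₂⁻¹ * X).trace = (N : ℝ) := by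
    intro X hX
    calc (C₂⁻¹ * X).trace
        = (C₂⁻¹ * C₂).trace + (C₂⁻¹ * (X - C₂)).trace := by
          rw [← Matrix.trace_add, ← Matrix.mul_add, add_sub_cancel]
      _ = (N : ℝ) := by
          rw [KLAux.trace_mul_eq_zero C₂⁻¹ (X - C₂) hC₂invOff
            (fun i k l => by rw [Matrix.sub_apply, hX, hC₂diag, sub_self]), e2, htr1, add_zero]
  have htrC2C : (C₂⁻¹ * C).trace = (N : ℝ) := diagsub C fun i k l => rfl
  have htrC2C1 : (C₂⁻¹ * C₁).trace = (N : ℝ) := diagsub C₁ hC₁diag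
  have hlog : Real.log C₁.det ≤ Real.log C₂.det := by
    apply KLAux.log_det_le_log_det hC₁PD hC₂PD
    rw [htrC2C1]; exact hcard.symm
  have hRinvPD : (R⁻¹).PosDef := hRPD.inv
  have hWPSD : (Uᵀ * R⁻¹ * U).PosSemidef := by
    have h := hRinvPD.posSemidef.conjTranspose_mul_mul_same U
    rwa [Matrix.conjTranspose_eq_transpose_of_trivial] at h
  have hMPD : (Cstar + Uᵀ * R⁻¹ * U).PosDef := hCstar.add_posSemidef hWPSD
  have hWood : C₁⁻¹ = R⁻¹ - R⁻¹ * U * (Cstar + Uᵀ * R⁻¹ * U)⁻¹ * (Uᵀ * R⁻¹) := by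
    rw [hC1, hCtdef]
    exact KLAux.woodbury R Cstar U hRPD hCstar hMPD
  have hSand : Uᵀ * C₁⁻¹ * U = Cstar - Cstar * (Cstar + Uᵀ * R⁻¹ * U)⁻¹ * Cstar := by
    rw [hC1, hCtdef]
    exact KLAux.sandwich R Cstar U hRPD hCstar hMPD
  have hMinvPSD : ((Cstar + Uᵀ * R⁻¹ * U)⁻¹).PosSemidef := hMPD.inv.posSemidef
  have hcs : Cstar⁻¹ * Cstar = 1 :=
    Matrix.nonsing_inv_mul _ ((Matrix.isUnit_iff_isUnit_det _).mp hCstar.isUnit)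
  have hterm : Cstar⁻¹ * (Cstar * (Cstar + Uᵀ * R⁻¹ * U)⁻¹ * Cstar)
      = (Cstar + Uᵀ * R⁻¹ * U)⁻¹ * Cstar := by
    rw [Matrix.mul_assoc Cstar,
      Matrix.nonsing_inv_mul_cancel_left _ _ ((Matrix.isUnit_iff_isUnit_det _).mp hCstar.isUnit)]
  have htrCt : (C₁⁻¹ * Ct).trace ≤ (m : ℝ) := by
    have h0 : 0 ≤ ((Cstar + Uᵀ * R⁻¹ * U)⁻¹ * Cstar).trace :=
      KLAux.trace_mul_nonneg hMinvPSD hCstar.posSemidef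
    have step : (C₁⁻¹ * Ct).trace = (Cstar⁻¹ * (Uᵀ * C₁⁻¹ * U)).trace := by
      rw [hCtdef]
      rw [show C₁⁻¹ * (U * Cstar⁻¹ * Uᵀ) = C₁⁻¹ * (U * Cstar⁻¹) * Uᵀ from
        (Matrix.mul_assoc _ _ _).symm]
      rw [Matrix.trace_mul_comm]
      rw [show Uᵀ * (C₁⁻¹ * (U * Cstar⁻¹)) = Uᵀ * C₁⁻¹ * U * Cstar⁻¹ from by
        simp only [Matrix.mul_assoc]]
      exact Matrix.trace_mul_comm _ _
    calc (C₁⁻¹ * Ct).trace = (Cstar⁻¹ * (Uᵀ * C₁⁻¹ * U)).trace := step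
      _ = (1 : Matrix (Fin m) (Fin m) ℝ).trace
            - ((Cstar + Uᵀ * R⁻¹ * U)⁻¹ * Cstar).trace := by
          rw [hSand, Matrix.mul_sub, Matrix.trace_sub, hcs, hterm]
      _ ≤ (m : ℝ) := by
          rw [Matrix.trace_one]
          simp only [Fintype.card_fin]
          linarith
  have hRinvBD : R⁻¹ = blockDiagonal' fun i => (Rb i)⁻¹ := by
    rw [hRdef]; exact KLAux.inv_blockDiagonal' hRbPD
  have hRinvOff : ∀ p q : (i : Fin J) × Fin (n i), p.1 ≠ q.1 → R⁻¹ p q = 0 := by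
    intro p q h
    rw [hRinvBD]
    obtain ⟨i, k⟩ := p; obtain ⟨j, l⟩ := q
    exact Matrix.blockDiagonal'_apply_ne _ _ _ h
  have er : R⁻¹ * R = 1 :=
    Matrix.nonsing_inv_mul _ ((Matrix.isUnit_iff_isUnit_det _).mp hRPD.isUnit)
  have hDzero : ∀ (i : Fin J) (k l : Fin (n i)), (C - Ct - R) ⟨i, k⟩ ⟨i, l⟩ = 0 := by
    intro i k l
    rw [Matrix.sub_apply, Matrix.sub_apply, hCtEntry, hRentry]
    ring
  have htrRD : (R⁻¹ * (C - Ct)).trace = (N : ℝ) := by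
    have hsplit : C - Ct = R + (C - Ct - R) := by abel
    rw [hsplit, Matrix.mul_add, Matrix.trace_add, er, htr1,
      KLAux.trace_mul_eq_zero R⁻¹ (C - Ct - R) hRinvOff hDzero, add_zero]
  have hRsym : R⁻¹ᵀ = R⁻¹ := by
    rw [Matrix.transpose_nonsing_inv]
    congr 1
    rw [← Matrix.conjTranspose_eq_transpose_of_trivial]
    exact hRPD.isHermitian.eq
  have hTP : (R⁻¹ * U)ᵀ = Uᵀ * R⁻¹ := by rw [Matrix.transpose_mul, hRsym]
  have hPSDconj : ((Uᵀ * R⁻¹) * (C - Ct) * (R⁻¹ * U)).PosSemidef := by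
    have h := hPSD.conjTranspose_mul_mul_same (R⁻¹ * U)
    rwa [Matrix.conjTranspose_eq_transpose_of_trivial, hTP] at h
  have hTermNN : 0 ≤ ((Cstar + Uᵀ * R⁻¹ * U)⁻¹ *
      ((Uᵀ * R⁻¹) * (C - Ct) * (R⁻¹ * U))).trace :=
    KLAux.trace_mul_nonneg hMinvPSD hPSDconj
  have htrD : (C₁⁻¹ * (C - Ct)).trace ≤ (N : ℝ) := by
    have key : (C₁⁻¹ * (C - Ct)).trace = (R⁻¹ * (C - Ct)).trace -
        ((Cstar + Uᵀ * R⁻¹ * U)⁻¹ * ((Uᵀ * R⁻¹) * (C - Ct) * (R⁻¹ * U))).trace := by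
      rw [hWood, Matrix.sub_mul, Matrix.trace_sub]
      congr 1
      rw [show R⁻¹ * U * (Cstar + Uᵀ * R⁻¹ * U)⁻¹ * (Uᵀ * R⁻¹) * (C - Ct)
          = R⁻¹ * U * (Cstar + Uᵀ * R⁻¹ * U)⁻¹ * ((Uᵀ * R⁻¹) * (C - Ct)) from by
        simp only [Matrix.mul_assoc]]
      rw [Matrix.trace_mul_comm]
      conv_rhs => rw [Matrix.trace_mul_comm]
      congr 1
      simp only [Matrix.mul_assoc]
    rw [key, htrRD]
    linarith
  have htrC1C : (C₁⁻¹ * C).trace ≤ (N : ℝ) + m := by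
    have hsplit : C₁⁻¹ * C = C₁⁻¹ * Ct + C₁⁻¹ * (C - Ct) := by
      rw [← Matrix.mul_add]
      congr 1
      abel
    rw [hsplit, Matrix.trace_add]
    linarith
  have hNR : (0 : ℝ) < N := by exact_mod_cast hNpos
  have hmain : D C₁ ≤ D C₂ + m / 2 := by
    rw [hD C₁, hD C₂]
    linarith
  calc 1 / (N : ℝ) * D C₁ ≤ 1 / (N : ℝ) * (D C₂ + m / 2) := by
        exact mul_le_mul_of_nonneg_left hmain (by positivity)
    _ ≤ 1 / (N : ℝ) * D C₂ + (m : ℝ) / (N : ℝ) := by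
        rw [mul_add]
        have h1 : 1 / (N : ℝ) * ((m : ℝ) / 2) ≤ (m : ℝ) / N := by
          rw [mul_comm, ← mul_one_div (m : ℝ) (N : ℝ)]
          have : (m : ℝ) / 2 ≤ (m : ℝ) := by
            have : (0 : ℝ) ≤ m := Nat.cast_nonneg m
            linarith
          exact mul_le_mul_of_nonneg_right this (by positivity)
        linarith
end

section
/- Let n_1,…,n_J be positive integers, N = n_1+⋯+n_J, and m a positive integer. Let C* ∈ ℝ^{m×m} be symmetric positive definite, U ∈ ℝ^{N×m}, and let C ∈ ℝ^{N×N} be symmetric with C − U (C*)^{-1} Uᵀ positive semidefinite. Let R ∈ ℝ^{N×N} be the block-diagonal matrix (with respect to the partition into blocks of sizes n_1,…,n_J) whose i-th diagonal block equals the i-th diagonal block of C − U (C*)^{-1} Uᵀ, and assume R is positive definite. Set C_1 := R + U (C*)^{-1} Uᵀ. Then tr(C_1^{-1} C) ≤ N + m. -/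
open Matrix


open scoped MatrixOrder in
lemma psd_sqrt_exists {ι : Type*} [Fintype ι] [DecidableEq ι] {A : Matrix ι ι ℝ}
    (hA : A.PosSemidef) : ∃ S : Matrix ι ι ℝ, Sᵀ = S ∧ S * S = A := by
  obtain ⟨X, hX, -, hXA⟩ := CFC.exists_sqrt_of_isSelfAdjoint_of_quasispectrumRestricts
    hA.isHermitian (QuasispectrumRestricts.nnreal_of_nonneg hA.nonneg)
  exact ⟨X, by rw [← conjTranspose_eq_transpose_of_trivial]; exact hX.star_eq, hXA⟩

lemma psd_cs {ι : Type*} [Fintype ι] [DecidableEq ι] {A : Matrix ι ι ℝ} (hA : A.PosSemidef)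
    (x y : ι → ℝ) : (x ⬝ᵥ A *ᵥ y) ^ 2 ≤ (x ⬝ᵥ A *ᵥ x) * (y ⬝ᵥ A *ᵥ y) := by
  obtain ⟨S, hSt, hS⟩ : ∃ S : Matrix ι ι ℝ, Sᵀ = S ∧ S * S = A :=
    psd_sqrt_exists hA
  have key : ∀ u v : ι → ℝ, u ⬝ᵥ A *ᵥ v = (S *ᵥ u) ⬝ᵥ (S *ᵥ v) := by
    intro u v
    rw [← hS, ← mulVec_mulVec, dotProduct_mulVec, ← mulVec_transpose, hSt]
  rw [key x y, key x x, key y y]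
  have := Finset.sum_mul_sq_le_sq_mul_sq Finset.univ (S *ᵥ x) (S *ᵥ y)
  simpa [dotProduct, pow_two] using this

lemma inv_quad_le {ι : Type*} [Fintype ι] [DecidableEq ι] {A B : Matrix ι ι ℝ}
    (hA : A.PosDef) (hB : B.PosDef) (hAB : (B - A).PosSemidef) (v : ι → ℝ) :
    v ⬝ᵥ B⁻¹ *ᵥ v ≤ v ⬝ᵥ A⁻¹ *ᵥ v := by
  set y := B⁻¹ *ᵥ v with hy
  set z := A⁻¹ *ᵥ v with hz
  have hBy : B *ᵥ y = v := by
    rw [hy, mulVec_mulVec, mul_nonsing_inv _ hB.det_pos.ne'.isUnit, one_mulVec]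
  have hAz : A *ᵥ z = v := by
    rw [hz, mulVec_mulVec, mul_nonsing_inv _ hA.det_pos.ne'.isUnit, one_mulVec]
  have ht : 0 ≤ v ⬝ᵥ y := by simpa using hB.inv.posSemidef.dotProduct_mulVec_nonneg v
  have hs : 0 ≤ v ⬝ᵥ z := by simpa using hA.inv.posSemidef.dotProduct_mulVec_nonneg v
  have h1 : y ⬝ᵥ A *ᵥ y ≤ v ⬝ᵥ y := by
    have := hAB.dotProduct_mulVec_nonneg y
    simp only [star_trivial, sub_mulVec, dotProduct_sub, sub_nonneg] at this
    calc y ⬝ᵥ A *ᵥ y ≤ y ⬝ᵥ B *ᵥ y := this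
    _ = v ⬝ᵥ y := by rw [hBy, dotProduct_comm]
  have h0 : 0 ≤ y ⬝ᵥ A *ᵥ y := by simpa using hA.posSemidef.dotProduct_mulVec_nonneg y
  have hcs : (v ⬝ᵥ y) ^ 2 ≤ (y ⬝ᵥ A *ᵥ y) * (v ⬝ᵥ z) := by
    have := psd_cs hA.posSemidef y z
    rwa [hAz, dotProduct_comm y v, dotProduct_comm z v] at this
  nlinarith [mul_le_mul_of_nonneg_right h1 hs]

lemma trace_mul_sq {ι : Type*} [Fintype ι] (M F : Matrix ι ι ℝ) (hF : Fᵀ = F) :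
    (M * (F * F)).trace = ∑ p, (fun q => F q p) ⬝ᵥ M *ᵥ (fun q => F q p) := by
  have h1 : ∀ a b, F a b = F b a := fun a b => by
    conv_lhs => rw [← hF, transpose_apply]
  rw [show M * (F * F) = M * F * F from (mul_assoc _ _ _).symm, trace_mul_comm, trace]
  refine Finset.sum_congr rfl fun p _ => ?_
  simp only [diag_apply, mul_apply, dotProduct, mulVec, Finset.mul_sum]
  refine Finset.sum_congr rfl fun q _ => Finset.sum_congr rfl fun r _ => ?_
  rw [h1 p q]

lemma trace_inv_mul_rank_le {ι : Type*} [Fintype ι] [DecidableEq ι] {m : ℕ}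
    {Q : Matrix ι ι ℝ} (hQ : Q.PosDef) (W : Matrix ι (Fin m) ℝ)
    (hQW : (Q - W * Wᵀ).PosSemidef) :
    (Q⁻¹ * (W * Wᵀ)).trace ≤ (m : ℝ) := by
  have key : ∀ i : Fin m, (Wᵀ * (Q⁻¹ * W)) i i ≤ 1 := by
    intro i
    set w : ι → ℝ := fun p => W p i with hw
    have hdiag : (Wᵀ * (Q⁻¹ * W)) i i = w ⬝ᵥ Q⁻¹ *ᵥ w := by
      simp only [mul_apply, dotProduct, mulVec, transpose_apply, Finset.mul_sum, hw]
    rw [hdiag]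
    set y := Q⁻¹ *ᵥ w with hy
    have hQy : Q *ᵥ y = w := by
      rw [hy, mulVec_mulVec, mul_nonsing_inv _ hQ.det_pos.ne'.isUnit, one_mulVec]
    set t := w ⬝ᵥ Q⁻¹ *ᵥ w with htdef
    have ht0 : 0 ≤ t := by simpa using hQ.inv.posSemidef.dotProduct_mulVec_nonneg w
    set u : Fin m → ℝ := y ᵥ* W with hu
    have hui : u i = t := by
      simp only [hu, vecMul, htdef, dotProduct, hw]
      exact Finset.sum_congr rfl fun p _ => mul_comm _ _
    have hWW : y ⬝ᵥ (W * Wᵀ) *ᵥ y = u ⬝ᵥ u := by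
      rw [← mulVec_mulVec, mulVec_transpose, dotProduct_mulVec]
    have hle : y ⬝ᵥ (W * Wᵀ) *ᵥ y ≤ t := by
      have := hQW.dotProduct_mulVec_nonneg y
      simp only [star_trivial, sub_mulVec, dotProduct_sub, sub_nonneg] at this
      calc y ⬝ᵥ (W * Wᵀ) *ᵥ y ≤ y ⬝ᵥ Q *ᵥ y := this
      _ = t := by rw [hQy, dotProduct_comm, htdef]
    have hsq : t ^ 2 ≤ t := by
      have h1 : (u i) * (u i) ≤ u ⬝ᵥ u :=
        Finset.single_le_sum (f := fun j => u j * u j)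
          (fun j _ => mul_self_nonneg _) (Finset.mem_univ i)
      calc t ^ 2 = u i * u i := by rw [hui, pow_two]
      _ ≤ u ⬝ᵥ u := h1
      _ = y ⬝ᵥ (W * Wᵀ) *ᵥ y := hWW.symm
      _ ≤ t := hle
    nlinarith
  calc (Q⁻¹ * (W * Wᵀ)).trace = (Wᵀ * (Q⁻¹ * W)).trace := by
        rw [show Q⁻¹ * (W * Wᵀ) = Q⁻¹ * W * Wᵀ from (Matrix.mul_assoc _ _ _).symm,
          trace_mul_comm]
  _ = ∑ i, (Wᵀ * (Q⁻¹ * W)) i i := rfl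
  _ ≤ ∑ _i : Fin m, (1 : ℝ) := Finset.sum_le_sum fun i _ => key i
  _ = m := by simp

lemma blockDiag_posDef {J : ℕ} {n : Fin J → ℕ}
    {R : Matrix ((i : Fin J) × Fin (n i)) ((i : Fin J) × Fin (n i)) ℝ} (hR : R.PosDef)
    (i : Fin J) : (Matrix.of fun k l : Fin (n i) => R ⟨i, k⟩ ⟨i, l⟩).PosDef := by
  have hsymm : ∀ p q, R p q = R q p := by
    intro p q
    conv_lhs => rw [← hR.1]
    simp [conjTranspose_apply]
  refine posDef_iff_dotProduct_mulVec.mpr ⟨?_, ?_⟩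
  · ext k l
    simp [conjTranspose_apply, hsymm]
  · intro x hx
    set v : ((j : Fin J) × Fin (n j)) → ℝ := fun q =>
      if h : q.1 = i then x (Fin.cast (congrArg n h) q.2) else 0 with hv
    have hvik : ∀ k : Fin (n i), v ⟨i, k⟩ = x k := by
      intro k
      simp [hv]
    have hvne : ∀ q, q.1 ≠ i → v q = 0 := fun q h => dif_neg h
    have hv0 : v ≠ 0 := by
      obtain ⟨k, hk⟩ := Function.ne_iff.mp hx
      intro h0
      exact hk (by rw [← hvik k, h0]; rfl)
    have hsum : ∀ f : ((j : Fin J) × Fin (n j)) → ℝ,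
        ∑ q, f q * v q = ∑ k, f ⟨i, k⟩ * x k := by
      intro f
      rw [← Finset.univ_sigma_univ, Finset.sum_sigma]
      rw [Finset.sum_eq_single i]
      · exact Finset.sum_congr rfl fun k _ => by rw [hvik]
      · intro j _ hj
        exact Finset.sum_eq_zero fun k _ => by rw [hvne ⟨j, k⟩ hj, mul_zero]
      · intro h; exact absurd (Finset.mem_univ i) h
    have hq := hR.dotProduct_mulVec_pos hv0
    rw [star_trivial] at hq
    have hcalc : v ⬝ᵥ R *ᵥ v = x ⬝ᵥ (Matrix.of fun k l : Fin (n i) => R ⟨i, k⟩ ⟨i, l⟩) *ᵥ x := by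
      have h1 : v ⬝ᵥ R *ᵥ v = ∑ k, (R *ᵥ v) ⟨i, k⟩ * x k := by
        rw [show v ⬝ᵥ R *ᵥ v = ∑ q, (R *ᵥ v) q * v q from
          Finset.sum_congr rfl fun q _ => mul_comm _ _]
        exact hsum _
      rw [h1]
      simp only [mulVec, dotProduct]
      rw [show ∑ k, (∑ q, R ⟨i, k⟩ q * v q) * x k
          = ∑ k, (∑ l, R ⟨i, k⟩ ⟨i, l⟩ * x l) * x k from
        Finset.sum_congr rfl fun k _ => by rw [hsum (R ⟨i, k⟩)]]
      exact Finset.sum_congr rfl fun k _ => by rw [mul_comm]; rfl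
    rw [star_trivial, ← hcalc]
    exact hq

lemma inv_off_block {J : ℕ} {n : Fin J → ℕ}
    {R : Matrix ((i : Fin J) × Fin (n i)) ((i : Fin J) × Fin (n i)) ℝ} (hR : R.PosDef)
    (hRoff : ∀ p q : (i : Fin J) × Fin (n i), p.1 ≠ q.1 → R p q = 0) :
    ∀ p q : (i : Fin J) × Fin (n i), p.1 ≠ q.1 → R⁻¹ p q = 0 := by
  set D : ∀ i : Fin J, Matrix (Fin (n i)) (Fin (n i)) ℝ :=
    fun i => Matrix.of fun k l => R ⟨i, k⟩ ⟨i, l⟩ with hD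
  have hRD : R = blockDiagonal' D := by
    ext ⟨j, k⟩ ⟨j', l⟩
    by_cases h : j = j'
    · subst h
      rw [blockDiagonal'_apply_eq]
      rfl
    · rw [blockDiagonal'_apply_ne _ _ _ h, hRoff _ _ h]
  have hinv : R⁻¹ = blockDiagonal' fun i => (D i)⁻¹ := by
    apply inv_eq_right_inv
    rw [hRD, ← blockDiagonal'_mul]
    rw [show (fun i => D i * (D i)⁻¹) = fun _ => 1 from funext fun i =>
      mul_nonsing_inv _ (blockDiag_posDef hR i).det_pos.ne'.isUnit]
    exact blockDiagonal'_one
  rintro ⟨j, k⟩ ⟨j', l⟩ h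
  rw [hinv]
  exact blockDiagonal'_apply_ne _ _ _ h

/-- Trace inequality from the proof of Proposition 1: with `R` the block-diagonal matrix whose
diagonal blocks are those of `C − U (C*)⁻¹ Uᵀ` (assumed PD), and `C₁ = R + U (C*)⁻¹ Uᵀ`,
one has `tr(C₁⁻¹ C) ≤ N + m`. -/
theorem trace_inv_mul_le
    {J m : ℕ} (hJ : 0 < J) (hm : 0 < m) (n : Fin J → ℕ) (hn : ∀ i, 0 < n i)
    (N : ℕ) (hN : N = ∑ i, n i)
    (Cstar : Matrix (Fin m) (Fin m) ℝ) (hCstar : Cstar.PosDef)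
    (U : Matrix ((i : Fin J) × Fin (n i)) (Fin m) ℝ)
    (C : Matrix ((i : Fin J) × Fin (n i)) ((i : Fin J) × Fin (n i)) ℝ)
    (hCsymm : C.IsSymm)
    (hPSD : (C - U * Cstar⁻¹ * Uᵀ).PosSemidef)
    (R : Matrix ((i : Fin J) × Fin (n i)) ((i : Fin J) × Fin (n i)) ℝ)
    (hRdiag : ∀ (i : Fin J) (k l : Fin (n i)),
      R ⟨i, k⟩ ⟨i, l⟩ = (C - U * Cstar⁻¹ * Uᵀ) ⟨i, k⟩ ⟨i, l⟩)
    (hRoff : ∀ p q : (i : Fin J) × Fin (n i), p.1 ≠ q.1 → R p q = 0)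
    (hR : R.PosDef) :
    ((R + U * Cstar⁻¹ * Uᵀ)⁻¹ * C).trace ≤ (N : ℝ) + (m : ℝ) := by
  set B := U * Cstar⁻¹ * Uᵀ with hB
  set E := C - B with hE
  set C₁ := R + B with hC1
  have hBpsd : B.PosSemidef := by
    have h1 := hCstar.inv.posSemidef.mul_mul_conjTranspose_same U
    rwa [conjTranspose_eq_transpose_of_trivial] at h1
  have hC1pd : C₁.PosDef := hR.add_posSemidef hBpsd
  have hC1subR : (C₁ - R).PosSemidef := by
    rw [hC1, add_sub_cancel_left]; exact hBpsd
  have hCsplit : C = E + B := by rw [hE, sub_add_cancel]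
  have hsplit : (C₁⁻¹ * C).trace = (C₁⁻¹ * E).trace + (C₁⁻¹ * B).trace := by
    rw [hCsplit, mul_add, trace_add]
  -- part 1 : tr (C₁⁻¹ E) ≤ N
  obtain ⟨F, hFsymm, hFF⟩ : ∃ F, Fᵀ = F ∧ F * F = E :=
    psd_sqrt_exists hPSD
  have h1 : (C₁⁻¹ * E).trace = ∑ p, (fun q => F q p) ⬝ᵥ C₁⁻¹ *ᵥ (fun q => F q p) := by
    rw [← hFF, trace_mul_sq _ _ hFsymm]
  have h2 : (R⁻¹ * E).trace = ∑ p, (fun q => F q p) ⬝ᵥ R⁻¹ *ᵥ (fun q => F q p) := by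
    rw [← hFF, trace_mul_sq _ _ hFsymm]
  have hpart1 : (C₁⁻¹ * E).trace ≤ (R⁻¹ * E).trace := by
    rw [h1, h2]
    exact Finset.sum_le_sum fun p _ => inv_quad_le hR hC1pd hC1subR _
  have htrRE : (R⁻¹ * E).trace = (N : ℝ) := by
    have hRoffinv := inv_off_block hR hRoff
    have hstep : (R⁻¹ * E).trace = (R⁻¹ * R).trace := by
      rw [trace, trace]
      refine Finset.sum_congr rfl fun p _ => ?_
      rw [diag_apply, diag_apply, mul_apply, mul_apply]
      refine Finset.sum_congr rfl fun q _ => ?_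
      by_cases h : p.1 = q.1
      · obtain ⟨i, k⟩ := p
        obtain ⟨j, l⟩ := q
        cases h
        rw [← hRdiag]
      · rw [hRoffinv p q h, zero_mul, zero_mul]
    rw [hstep, nonsing_inv_mul R hR.det_pos.ne'.isUnit, trace_one]
    simp [Fintype.card_sigma, hN]
  -- part 2 : tr (C₁⁻¹ B) ≤ m
  obtain ⟨T, hTsymm, hTT⟩ : ∃ T, Tᵀ = T ∧ T * T = Cstar⁻¹ :=
    psd_sqrt_exists hCstar.inv.posSemidef
  have hWW : (U * T) * (U * T)ᵀ = B := by
    rw [transpose_mul, hTsymm, hB, ← hTT]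
    simp only [Matrix.mul_assoc]
  have hpart2 : (C₁⁻¹ * B).trace ≤ (m : ℝ) := by
    rw [← hWW]
    refine trace_inv_mul_rank_le hC1pd (U * T) ?_
    rw [hWW, hC1, add_sub_cancel_right]
    exact hR.posSemidef
  calc (C₁⁻¹ * C).trace = (C₁⁻¹ * E).trace + (C₁⁻¹ * B).trace := hsplit
  _ ≤ (N : ℝ) + (m : ℝ) := add_le_add (htrRE ▸ hpart1) hpart2
end

section
/- Let R ∈ ℝ^{N×N} be symmetric positive definite, C* ∈ ℝ^{m×m} symmetric positive definite, and U ∈ ℝ^{N×m} arbitrary. Then tr( Uᵀ R^{-1} U (C* + Uᵀ R^{-1} U)^{-1} ) ≤ m. -/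
open Matrix
open scoped MatrixOrder

private lemma trace_nonneg_of_posSemidef {n : ℕ} {A : Matrix (Fin n) (Fin n) ℝ}
    (hA : A.PosSemidef) : 0 ≤ A.trace :=
  hA.trace_nonneg

/-- Intermediate trace claim in the proof of Proposition 1:
`tr(Uᵀ R⁻¹ U (C* + Uᵀ R⁻¹ U)⁻¹) ≤ m` for PD `R`, PD `C*` and arbitrary `U`. -/
theorem trace_le_of_posDef
    {N m : ℕ} (R : Matrix (Fin N) (Fin N) ℝ) (hR : R.PosDef)
    (Cstar : Matrix (Fin m) (Fin m) ℝ) (hCstar : Cstar.PosDef)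
    (U : Matrix (Fin N) (Fin m) ℝ) :
    (Uᵀ * R⁻¹ * U * (Cstar + Uᵀ * R⁻¹ * U)⁻¹).trace ≤ (m : ℝ) := by
  set B := Uᵀ * R⁻¹ * U with hBdef
  have hB : B.PosSemidef := by
    have := hR.inv.posSemidef.conjTranspose_mul_mul_same U
    simpa [conjTranspose_eq_transpose_of_trivial] using this
  have hS : (Cstar + B).PosDef := hCstar.add_posSemidef hB
  have hSinv : (Cstar + B)⁻¹.PosDef := hS.inv
  have hinv : (Cstar + B) * (Cstar + B)⁻¹ = 1 :=
    mul_nonsing_inv _ (isUnit_iff_isUnit_det _ |>.1 hS.isUnit)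
  have key : B * (Cstar + B)⁻¹ = 1 - Cstar * (Cstar + B)⁻¹ := by
    have h := hinv
    rw [add_mul] at h
    rw [← h]; abel
  have htr : (B * (Cstar + B)⁻¹).trace = (m : ℝ) - (Cstar * (Cstar + B)⁻¹).trace := by
    rw [key, trace_sub, trace_one]
    simp
  have hQ := hCstar.posSemidef
  have hnonneg : 0 ≤ (Cstar * (Cstar + B)⁻¹).trace := by
    have hsqrt : CFC.sqrt Cstar * CFC.sqrt Cstar = Cstar := CFC.sqrt_mul_sqrt_self Cstar hQ.nonneg
    have h1 : Cstar * (Cstar + B)⁻¹ = CFC.sqrt Cstar * (CFC.sqrt Cstar * (Cstar + B)⁻¹) := by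
      rw [← mul_assoc, hsqrt]
    have h2 : (Cstar * (Cstar + B)⁻¹).trace
        = (CFC.sqrt Cstar * (Cstar + B)⁻¹ * CFC.sqrt Cstar).trace := by
      rw [h1, trace_mul_comm]
    rw [h2]
    have hPSD : (CFC.sqrt Cstar * (Cstar + B)⁻¹ * CFC.sqrt Cstar).PosSemidef := by
      have := hSinv.posSemidef.conjTranspose_mul_mul_same (CFC.sqrt Cstar)
      rwa [(CFC.sqrt_nonneg Cstar).posSemidef.1.eq] at this
    exact trace_nonneg_of_posSemidef hPSD
  rw [htr]
  linarith
end

section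
/- Let C_0, C_1, C_2 > 0 and ᾱ > 0 be real constants, let τ ≥ 1 be an integer and τ̄ > 0 a real number. Define A_0 := min{ C_0 / (C_2 + √(C_1 C_0)), ᾱ } and A_1 := 1/(C_0 A_0), and assume C_0 · A_0 ≤ 1. Let β ∈ (0,1) and set α := β A_0 (τ̄+1)^{-1} (τ+1)^{-1}. Suppose (V_t)_{t∈ℕ} is a sequence of nonnegative real numbers such that for every t ∈ ℕ: V_{t+1} ≤ (1 − α C_0) V_t + α³ τ τ̄ C_1 · max{ V_s : s ∈ ℕ, t−3τ ≤ s ≤ t } + α² τ τ̄ C_2 · max{ V_s : s ∈ ℕ, t−2τ ≤ s ≤ t }. Then for all t ∈ ℕ: V_t ≤ ( 1 − ((1−β)β / (A_1 + 8β²)) · (τ̄+1)^{-1} (τ+1)^{-1} )^t · V_0. -/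
set_option maxHeartbeats 1000000

/-- Lemma 3 (Lyapunov contraction): if the nonnegative sequence `V` satisfies the recursive
Lyapunov inequality with constants `C₀, C₁, C₂ > 0`, staleness bounds `τ ≥ 1`, `τ̄ > 0`, and the
step size is `α = β A₀ (τ̄+1)⁻¹(τ+1)⁻¹` with `A₀ = min{C₀/(C₂+√(C₁C₀)), ᾱ}`, `A₁ = 1/(C₀A₀)`,
then `V` converges linearly with the stated rate. -/
theorem lyapunov_contraction
    (C₀ C₁ C₂ αbar : ℝ) (hC₀ : 0 < C₀) (hC₁ : 0 < C₁) (hC₂ : 0 < C₂) (hαbar : 0 < αbar)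
    (τ : ℕ) (hτ : 1 ≤ τ) (τbar : ℝ) (hτbar : 0 < τbar)
    (A₀ A₁ : ℝ)
    (hA₀ : A₀ = min (C₀ / (C₂ + Real.sqrt (C₁ * C₀))) αbar)
    (hA₁ : A₁ = 1 / (C₀ * A₀))
    (hsmall : C₀ * A₀ ≤ 1)
    (β : ℝ) (hβ0 : 0 < β) (hβ1 : β < 1)
    (α : ℝ) (hα : α = β * A₀ * (τbar + 1)⁻¹ * ((τ : ℝ) + 1)⁻¹)
    (V : ℕ → ℝ) (hVnonneg : ∀ t, 0 ≤ V t)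
    (hrec : ∀ t : ℕ,
      V (t + 1) ≤ (1 - α * C₀) * V t
        + α ^ 3 * (τ : ℝ) * τbar * C₁ *
            ((Finset.Icc (t - 3 * τ) t).sup' (Finset.nonempty_Icc.mpr (Nat.sub_le t (3 * τ))) V)
        + α ^ 2 * (τ : ℝ) * τbar * C₂ *
            ((Finset.Icc (t - 2 * τ) t).sup' (Finset.nonempty_Icc.mpr (Nat.sub_le t (2 * τ))) V)) :
    ∀ t : ℕ,
      V t ≤ (1 - (1 - β) * β / (A₁ + 8 * β ^ 2) * (τbar + 1)⁻¹ * ((τ : ℝ) + 1)⁻¹) ^ t * V 0 := by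
  have hT1 : (1:ℝ) ≤ (τ:ℝ) := by exact_mod_cast hτ
  set T : ℝ := (τ:ℝ) with hTdef
  have hT0 : (0:ℝ) ≤ T := by linarith
  have hτb0 : (0:ℝ) ≤ τbar := hτbar.le
  have hsq0 : (0:ℝ) ≤ Real.sqrt (C₁ * C₀) := Real.sqrt_nonneg _
  have hdenpos : (0:ℝ) < C₂ + Real.sqrt (C₁ * C₀) := by linarith
  have hA₀pos : 0 < A₀ := by
    rw [hA₀]; exact lt_min (div_pos hC₀ hdenpos) hαbar
  have hA₀le : A₀ ≤ C₀ / (C₂ + Real.sqrt (C₁ * C₀)) := by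
    rw [hA₀]; exact min_le_left _ _
  have hAC : A₀ * (C₂ + Real.sqrt (C₁ * C₀)) ≤ C₀ := by
    rw [← le_div_iff₀ hdenpos]; exact hA₀le
  have hACexp : A₀ * C₂ + A₀ * Real.sqrt (C₁ * C₀) ≤ C₀ := by
    have e : A₀ * C₂ + A₀ * Real.sqrt (C₁ * C₀) = A₀ * (C₂ + Real.sqrt (C₁ * C₀)) := by ring
    linarith [e.le, e.ge, hAC]
  have hC2b : A₀ * C₂ ≤ C₀ := by
    linarith [mul_nonneg hA₀pos.le hsq0]
  have hsqb : A₀ * Real.sqrt (C₁ * C₀) ≤ C₀ := by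
    linarith [mul_nonneg hA₀pos.le hC₂.le]
  have hsq : Real.sqrt (C₁ * C₀) ^ 2 = C₁ * C₀ := Real.sq_sqrt (mul_pos hC₁ hC₀).le
  have hC1b : A₀ ^ 2 * C₁ ≤ C₀ := by
    have h2 : A₀ ^ 2 * (C₁ * C₀) ≤ C₀ * C₀ := by
      calc A₀ ^ 2 * (C₁ * C₀) = A₀ ^ 2 * Real.sqrt (C₁ * C₀) ^ 2 := by rw [hsq]
        _ = (A₀ * Real.sqrt (C₁ * C₀)) * (A₀ * Real.sqrt (C₁ * C₀)) := by ring
        _ ≤ C₀ * C₀ := mul_le_mul hsqb hsqb (mul_nonneg hA₀pos.le hsq0) hC₀.le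
    have h3 : (A₀ ^ 2 * C₁) * C₀ ≤ C₀ * C₀ := by linarith [h2]
    exact le_of_mul_le_mul_right (by linarith [h3]) hC₀
  have hx0 : 0 < C₀ * A₀ := mul_pos hC₀ hA₀pos
  set x : ℝ := C₀ * A₀ with hxdef
  have hx1 : x ≤ 1 := hsmall
  have hA₁x : A₁ * x = 1 := by rw [hA₁]; field_simp
  have hA₁pos : 0 < A₁ := by rw [hA₁]; exact div_pos one_pos hx0
  have hA₁ge1 : 1 ≤ A₁ := by
    have h := mul_nonneg hA₁pos.le (show (0:ℝ) ≤ 1 - x by linarith)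
    linarith [h, hA₁x]
  -- D and its facts
  have hb1 : (0:ℝ) < τbar + 1 := by linarith
  have hTpos1 : (0:ℝ) < T + 1 := by linarith
  set D : ℝ := (τbar + 1)⁻¹ * (T + 1)⁻¹ with hDdef
  have hD0 : 0 < D := mul_pos (inv_pos.mpr hb1) (inv_pos.mpr hTpos1)
  have hDE : D * ((T + 1) * (τbar + 1)) = 1 := by
    rw [hDdef]; field_simp
  have hαD : α = β * A₀ * D := by rw [hα, hDdef]; ring
  have hα0 : 0 < α := by rw [hαD]; exact mul_pos (mul_pos hβ0 hA₀pos) hD0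
  have hαC : α * C₀ = β * x * D := by rw [hαD, hxdef]; ring
  have hProd : (0:ℝ) < (T + 1) * (τbar + 1) := mul_pos hTpos1 hb1
  have hTDb : T * D * (τbar + 1) ≤ 1 := by
    have e : T * D * (τbar + 1) * ((T + 1) * (τbar + 1)) = T * (τbar + 1) := by
      linear_combination (T * (τbar + 1)) * hDE
    have pos2 : 0 ≤ (T + 1) * (τbar + 1) - T * (τbar + 1) := by linarith [hb1]
    have h4 : (1 - T * D * (τbar + 1)) * ((T + 1) * (τbar + 1))
        = (T + 1) * (τbar + 1) - T * (τbar + 1) := by linear_combination -e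
    have h5 : 0 ≤ (1 - T * D * (τbar + 1)) * ((T + 1) * (τbar + 1)) := by
      rw [h4]; exact pos2
    linarith [(mul_nonneg_iff_of_pos_right hProd).mp h5]
  have hTD : T * D ≤ 1 := by
    have h := mul_nonneg (mul_nonneg hT0 hD0.le) hτb0
    linarith [hTDb, h]
  have hDhalf : D ≤ 1/2 := by
    have h2 : (2:ℝ) ≤ (T + 1) * (τbar + 1) := by linarith [mul_nonneg hT0 hτb0]
    have h3 := mul_le_mul_of_nonneg_left h2 hD0.le
    linarith [h3, hDE]
  have hTbD : 4 * (T * τbar * D) ≤ τbar + 1 := by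
    have pos2 : 0 ≤ (τbar + 1) ^ 2 * (T + 1) - 4 * (T * τbar) := by
      linarith [mul_nonneg (sq_nonneg (τbar - 1)) (by linarith : (0:ℝ) ≤ T + 1), hτb0]
    have h4 : ((τbar + 1) - 4 * (T * τbar * D)) * ((T + 1) * (τbar + 1))
        = (τbar + 1) ^ 2 * (T + 1) - 4 * (T * τbar) := by
      linear_combination (-(4 * (T * τbar))) * hDE
    have h5 : 0 ≤ ((τbar + 1) - 4 * (T * τbar * D)) * ((T + 1) * (τbar + 1)) := by
      rw [h4]; exact pos2
    linarith [(mul_nonneg_iff_of_pos_right hProd).mp h5]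
  -- the contraction constant c
  set c : ℝ := (1 - β) * β / (A₁ + 8 * β ^ 2) * (τbar + 1)⁻¹ * (T + 1)⁻¹ with hcdef
  have hcD : c = (1 - β) * β / (A₁ + 8 * β ^ 2) * D := by rw [hcdef, hDdef]; ring
  have h1β : 0 < 1 - β := by linarith
  have hden : 0 < A₁ + 8 * β ^ 2 := add_pos_of_pos_of_nonneg hA₁pos (by positivity)
  have hc0 : 0 < c := by
    rw [hcD]; exact mul_pos (div_pos (mul_pos h1β hβ0) hden) hD0
  have hcle : c ≤ D / 4 := by
    have h1 : (1 - β) * β / (A₁ + 8 * β ^ 2) ≤ 1/4 := by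
      rw [div_le_div_iff₀ hden (by norm_num)]
      linarith [sq_nonneg (1 - 2*β), hA₁ge1, sq_nonneg β]
    have h2 := mul_le_mul_of_nonneg_right h1 hD0.le
    rw [hcD]; linarith [h2]
  have hcle2 : c ≤ (1 - β) * β * x * D := by
    have h1 : (1 - β) * β / (A₁ + 8 * β ^ 2) ≤ (1 - β) * β * x := by
      rw [div_le_iff₀ hden]
      have e : (1 - β) * β * x * (A₁ + 8 * β ^ 2)
          = (1 - β) * β * (A₁ * x) + 8 * (1 - β) * β ^ 3 * x := by ring
      rw [e, hA₁x]
      have h := mul_nonneg (mul_nonneg (mul_nonneg h1β.le hβ0.le) (sq_nonneg β)) hx0.le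
      linarith [h]
    have h2 := mul_le_mul_of_nonneg_right h1 hD0.le
    rw [hcD]; linarith [h2]
  have hTc : T * c ≤ 1/4 := by
    have h := mul_le_mul_of_nonneg_left hcle hT0
    linarith [h, hTD]
  have h3pos : (0:ℝ) < 1 - 3 * T * c := by linarith [hTc]
  have h2pos : (0:ℝ) < 1 - 2 * T * c := by linarith [hTc]
  have hq3 : (1:ℝ)/4 ≤ 1 - 3 * T * c := by linarith [hTc]
  have hρ0 : 0 < 1 - c := by linarith [hcle, hDhalf]
  have hρ1 : 1 - c ≤ 1 := by linarith
  -- Bernoulli lower bounds for powers of the rate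
  have hB3 : 1 - 3 * T * c ≤ (1 - c) ^ (3 * τ) := by
    have h := one_add_mul_le_pow (show (-2:ℝ) ≤ -c by linarith) (3 * τ)
    have e : ((3 * τ : ℕ) : ℝ) = 3 * T := by push_cast [hTdef]; ring
    rw [e] at h
    have e2 : (1:ℝ) + -c = 1 - c := by ring
    rw [e2] at h
    linarith [h]
  have hB2 : 1 - 2 * T * c ≤ (1 - c) ^ (2 * τ) := by
    have h := one_add_mul_le_pow (show (-2:ℝ) ≤ -c by linarith) (2 * τ)
    have e : ((2 * τ : ℕ) : ℝ) = 2 * T := by push_cast [hTdef]; ring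
    rw [e] at h
    have e2 : (1:ℝ) + -c = 1 - c := by ring
    rw [e2] at h
    linarith [h]
  -- bounds on the perturbation coefficients
  have hP0 : 0 ≤ α ^ 3 * T * τbar * C₁ :=
    mul_nonneg (mul_nonneg (mul_nonneg (pow_nonneg hα0.le 3) hT0) hτb0) hC₁.le
  have hQ0 : 0 ≤ α ^ 2 * T * τbar * C₂ :=
    mul_nonneg (mul_nonneg (mul_nonneg (pow_nonneg hα0.le 2) hT0) hτb0) hC₂.le
  have hcoef3 : (0:ℝ) ≤ β ^ 3 * D ^ 3 * T * τbar * A₀ :=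
    mul_nonneg (mul_nonneg (mul_nonneg
      (mul_nonneg (pow_nonneg hβ0.le 3) (pow_nonneg hD0.le 3)) hT0) hτb0) hA₀pos.le
  have hcoef2 : (0:ℝ) ≤ β ^ 2 * D ^ 2 * T * τbar * A₀ :=
    mul_nonneg (mul_nonneg (mul_nonneg
      (mul_nonneg (pow_nonneg hβ0.le 2) (pow_nonneg hD0.le 2)) hT0) hτb0) hA₀pos.le
  have hA_le : α ^ 3 * T * τbar * C₁ ≤ β ^ 3 * D ^ 3 * T * τbar * x := by
    have e1 : α ^ 3 * T * τbar * C₁ = β ^ 3 * D ^ 3 * T * τbar * A₀ * (A₀ ^ 2 * C₁) := by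
      rw [hαD]; ring
    have e2 : β ^ 3 * D ^ 3 * T * τbar * x = β ^ 3 * D ^ 3 * T * τbar * A₀ * C₀ := by
      rw [hxdef]; ring
    rw [e1, e2]
    exact mul_le_mul_of_nonneg_left hC1b hcoef3
  have hB_le : α ^ 2 * T * τbar * C₂ ≤ β ^ 2 * D ^ 2 * T * τbar * x := by
    have e1 : α ^ 2 * T * τbar * C₂ = β ^ 2 * D ^ 2 * T * τbar * A₀ * (A₀ * C₂) := by
      rw [hαD]; ring
    have e2 : β ^ 2 * D ^ 2 * T * τbar * x = β ^ 2 * D ^ 2 * T * τbar * A₀ * C₀ := by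
      rw [hxdef]; ring
    rw [e1, e2]
    exact mul_le_mul_of_nonneg_left hC2b hcoef2
  have hβxD2 : (0:ℝ) ≤ β ^ 2 * x * D ^ 2 :=
    mul_nonneg (mul_nonneg (sq_nonneg β) hx0.le) (sq_nonneg D)
  -- the two key scalar bounds
  have k1 : α ^ 3 * T * τbar * C₁ / (1 - 3 * T * c) ≤ β ^ 2 * x * D * ((τbar + 1) * D) := by
    rw [div_le_iff₀ h3pos]
    have hβTbD : β * (T * τbar * D) ≤ (τbar + 1) / 4 := by
      have h := mul_nonneg (mul_nonneg (mul_nonneg h1β.le hT0) hτb0) hD0.le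
      linarith [hTbD, h]
    have hmid : β ^ 3 * D ^ 3 * T * τbar * x ≤ β ^ 2 * x * D * ((τbar + 1) * D) * (1/4) := by
      have h := mul_le_mul_of_nonneg_left hβTbD hβxD2
      linarith [h]
    have hnn : (0:ℝ) ≤ β ^ 2 * x * D * ((τbar + 1) * D) := by
      have : (0:ℝ) ≤ (τbar + 1) * D := mul_nonneg hb1.le hD0.le
      exact mul_nonneg (mul_nonneg (mul_nonneg (sq_nonneg β) hx0.le) hD0.le) this
    have hlast := mul_le_mul_of_nonneg_left hq3 hnn
    linarith [hA_le, hmid, hlast]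
  have k2 : α ^ 2 * T * τbar * C₂ / (1 - 2 * T * c)
      ≤ β ^ 2 * x * D * (T * τbar * D + T * D) := by
    rw [div_le_iff₀ h2pos]
    have k2a : 2 * (T * c * (τbar + 1)) ≤ 1 := by
      have h := mul_le_mul_of_nonneg_left hcle
        (show (0:ℝ) ≤ T * (τbar + 1) from mul_nonneg hT0 hb1.le)
      linarith [h, hTDb]
    have hin : τbar ≤ (τbar + 1) * (1 - 2 * T * c) := by linarith [k2a]
    have hmul := mul_le_mul_of_nonneg_left hin
      (show (0:ℝ) ≤ β ^ 2 * x * T * D ^ 2 from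
        mul_nonneg (mul_nonneg (mul_nonneg (sq_nonneg β) hx0.le) hT0) (sq_nonneg D))
    linarith [hB_le, hmul]
  have k3 : ((τbar + 1) + T * τbar + T) * D = 1 := by linear_combination hDE
  have hkey : α ^ 3 * T * τbar * C₁ / (1 - 3 * T * c)
      + α ^ 2 * T * τbar * C₂ / (1 - 2 * T * c) ≤ α * C₀ - c := by
    have sum_eq : β ^ 2 * x * D * ((τbar + 1) * D)
        + β ^ 2 * x * D * (T * τbar * D + T * D) = β ^ 2 * x * D := by
      linear_combination (β ^ 2 * x * D) * k3
    have k4 : c ≤ α * C₀ - β ^ 2 * x * D := by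
      have e : (1 - β) * β * x * D = β * x * D - β ^ 2 * x * D := by ring
      rw [hαC]; linarith [hcle2, e.ge, e.le]
    linarith [k1, k2, sum_eq, k4]
  have hαC1 : α * C₀ ≤ 1 := by
    have hb : β * x ≤ 1 := by linarith [mul_nonneg h1β.le hx0.le, hx1]
    have h2 := mul_le_mul_of_nonneg_right hb hD0.le
    rw [hαC]; linarith [h2, hDhalf]
  -- main induction
  intro t
  induction t using Nat.strong_induction_on with
  | _ t ih =>
    cases t with
    | zero => simp
    | succ t =>
      have ihs : ∀ s, s ≤ t → V s ≤ (1 - c) ^ s * V 0 := fun s hs =>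
        ih s (Nat.lt_succ_of_le hs)
      have m3 : (Finset.Icc (t - 3 * τ) t).sup'
          (Finset.nonempty_Icc.mpr (Nat.sub_le t (3 * τ))) V
          ≤ (1 - c) ^ (t - 3 * τ) * V 0 := by
        apply Finset.sup'_le
        intro s hs
        obtain ⟨h1, h2⟩ := Finset.mem_Icc.mp hs
        calc V s ≤ (1 - c) ^ s * V 0 := ihs s h2
          _ ≤ (1 - c) ^ (t - 3 * τ) * V 0 :=
            mul_le_mul_of_nonneg_right (pow_le_pow_of_le_one hρ0.le hρ1 h1) (hVnonneg 0)
      have m2 : (Finset.Icc (t - 2 * τ) t).sup'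
          (Finset.nonempty_Icc.mpr (Nat.sub_le t (2 * τ))) V
          ≤ (1 - c) ^ (t - 2 * τ) * V 0 := by
        apply Finset.sup'_le
        intro s hs
        obtain ⟨h1, h2⟩ := Finset.mem_Icc.mp hs
        calc V s ≤ (1 - c) ^ s * V 0 := ihs s h2
          _ ≤ (1 - c) ^ (t - 2 * τ) * V 0 :=
            mul_le_mul_of_nonneg_right (pow_le_pow_of_le_one hρ0.le hρ1 h1) (hVnonneg 0)
      have e3 : (1 - c) ^ (t - 3 * τ) ≤ (1 - c) ^ t / (1 - 3 * T * c) := by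
        rw [le_div_iff₀ h3pos]
        calc (1 - c) ^ (t - 3 * τ) * (1 - 3 * T * c)
            ≤ (1 - c) ^ (t - 3 * τ) * (1 - c) ^ (3 * τ) :=
              mul_le_mul_of_nonneg_left hB3 (pow_nonneg hρ0.le _)
          _ = (1 - c) ^ (t - 3 * τ + 3 * τ) := (pow_add _ _ _).symm
          _ ≤ (1 - c) ^ t := pow_le_pow_of_le_one hρ0.le hρ1 le_tsub_add
      have e2 : (1 - c) ^ (t - 2 * τ) ≤ (1 - c) ^ t / (1 - 2 * T * c) := by
        rw [le_div_iff₀ h2pos]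
        calc (1 - c) ^ (t - 2 * τ) * (1 - 2 * T * c)
            ≤ (1 - c) ^ (t - 2 * τ) * (1 - c) ^ (2 * τ) :=
              mul_le_mul_of_nonneg_left hB2 (pow_nonneg hρ0.le _)
          _ = (1 - c) ^ (t - 2 * τ + 2 * τ) := (pow_add _ _ _).symm
          _ ≤ (1 - c) ^ t := pow_le_pow_of_le_one hρ0.le hρ1 le_tsub_add
      have hVt : V t ≤ (1 - c) ^ t * V 0 := ihs t le_rfl
      have hcoef : (1 - α * C₀) + α ^ 3 * T * τbar * C₁ / (1 - 3 * T * c)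
          + α ^ 2 * T * τbar * C₂ / (1 - 2 * T * c) ≤ 1 - c := by linarith [hkey]
      calc V (t + 1)
          ≤ (1 - α * C₀) * V t
            + α ^ 3 * T * τbar * C₁ *
              ((Finset.Icc (t - 3 * τ) t).sup'
                (Finset.nonempty_Icc.mpr (Nat.sub_le t (3 * τ))) V)
            + α ^ 2 * T * τbar * C₂ *
              ((Finset.Icc (t - 2 * τ) t).sup'
                (Finset.nonempty_Icc.mpr (Nat.sub_le t (2 * τ))) V) := hrec t
        _ ≤ (1 - α * C₀) * ((1 - c) ^ t * V 0)
            + α ^ 3 * T * τbar * C₁ * ((1 - c) ^ (t - 3 * τ) * V 0)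
            + α ^ 2 * T * τbar * C₂ * ((1 - c) ^ (t - 2 * τ) * V 0) := by
          have h1 := mul_le_mul_of_nonneg_left hVt (by linarith : (0:ℝ) ≤ 1 - α * C₀)
          have h2 := mul_le_mul_of_nonneg_left m3 hP0
          have h3 := mul_le_mul_of_nonneg_left m2 hQ0
          linarith [h1, h2, h3]
        _ ≤ (1 - α * C₀) * ((1 - c) ^ t * V 0)
            + α ^ 3 * T * τbar * C₁ * ((1 - c) ^ t / (1 - 3 * T * c) * V 0)
            + α ^ 2 * T * τbar * C₂ * ((1 - c) ^ t / (1 - 2 * T * c) * V 0) := by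
          have h2 := mul_le_mul_of_nonneg_left
            (mul_le_mul_of_nonneg_right e3 (hVnonneg 0)) hP0
          have h3 := mul_le_mul_of_nonneg_left
            (mul_le_mul_of_nonneg_right e2 (hVnonneg 0)) hQ0
          linarith [h2, h3]
        _ = ((1 - α * C₀) + α ^ 3 * T * τbar * C₁ / (1 - 3 * T * c)
            + α ^ 2 * T * τbar * C₂ / (1 - 2 * T * c)) * ((1 - c) ^ t * V 0) := by
          ring
        _ ≤ (1 - c) * ((1 - c) ^ t * V 0) :=
          mul_le_mul_of_nonneg_right hcoef
            (mul_nonneg (pow_nonneg hρ0.le t) (hVnonneg 0))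
        _ = (1 - c) ^ (t + 1) * V 0 := by ring
end

section
/- Let E_1 and E_2 be real inner product spaces and J a positive integer. For j = 1,…,J let f_j : E_1 × E_2 → ℝ be differentiable with L_j-Lipschitz gradient (L_j > 0), and let h : E_1 × E_2 → ℝ be differentiable with L_h-Lipschitz gradient (L_h > 0), where E_1 × E_2 carries the product inner product. Assume f := (1/J)Σ_{j=1}^J f_j + h is μ-strongly convex for some μ > 0, i.e., f(z') ≥ f(z) + ⟨∇f(z), z'−z⟩ + (μ/2)‖z'−z‖² for all z, z' ∈ E_1 × E_2. Set L̄ := (1/J)Σ_{j=1}^J L_j. Given points x_2^0, x_2^1, …, x_2^J ∈ E_2 and y_2^0, y_2^1, …, y_2^J ∈ E_2, suppose x_1* ∈ E_1 is a global minimizer of the map x_1 ↦ (1/J)Σ_{j=1}^J f_j(x_1, x_2^j) + h(x_1, x_2^0) and y_1* ∈ E_1 is a global minimizer of the map y_1 ↦ (1/J)Σ_{j=1}^J f_j(y_1, y_2^j) + h(y_1, y_2^0). Then ‖x_1* − y_1*‖ ≤ (1/μ)·(1/J)·Σ_{j=1}^J L_j·( ‖x_2^j − x_2^0‖ + ‖y_2^j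 − y_2^0‖ ) + (1/μ)·(L_h + L̄)·‖x_2^0 − y_2^0‖. -/
open RealInnerProductSpace InnerProductSpace

section Helpers

variable {G : Type*} [NormedAddCommGroup G] [InnerProductSpace ℝ G] [CompleteSpace G]

lemma hga_add' {f g : G → ℝ} {f' g' x : G} (hf : HasGradientAt f f' x)
    (hg : HasGradientAt g g' x) : HasGradientAt (fun y => f y + g y) (f' + g') x := by
  rw [hasGradientAt_iff_hasFDerivAt] at *
  simpa using hf.fun_add hg

lemma hga_const_mul' {f : G → ℝ} {f' x : G} (c : ℝ) (hf : HasGradientAt f f' x) :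
    HasGradientAt (fun y => c * f y) (c • f') x := by
  rw [hasGradientAt_iff_hasFDerivAt] at *
  simpa using hf.const_mul c

lemma hga_sum' {ι : Type*} (s : Finset ι) {f : ι → G → ℝ} {f' : ι → G} {x : G}
    (hf : ∀ i ∈ s, HasGradientAt (f i) (f' i) x) :
    HasGradientAt (fun y => ∑ i ∈ s, f i y) (∑ i ∈ s, f' i) x := by
  rw [hasGradientAt_iff_hasFDerivAt]
  simp only [map_sum]
  exact HasFDerivAt.fun_sum (fun i hi => (hf i hi))

end Helpers

section Slice

variable {E₁ E₂ : Type*} [NormedAddCommGroup E₁] [InnerProductSpace ℝ E₁] [CompleteSpace E₁]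
  [NormedAddCommGroup E₂] [InnerProductSpace ℝ E₂] [CompleteSpace E₂]

noncomputable def inclCLM : E₁ →L[ℝ] WithLp 2 (E₁ × E₂) :=
  ((WithLp.prodContinuousLinearEquiv 2 ℝ E₁ E₂).symm : (E₁ × E₂) →L[ℝ] WithLp 2 (E₁ × E₂)).comp
    ((ContinuousLinearMap.id ℝ E₁).prod 0)

omit [CompleteSpace E₁] [CompleteSpace E₂] in
lemma inclCLM_apply (u : E₁) :
    (inclCLM u : WithLp 2 (E₁ × E₂)) = (WithLp.equiv 2 (E₁ × E₂)).symm (u, 0) := rfl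

lemma hga_slice {g : WithLp 2 (E₁ × E₂) → ℝ} (c : E₂) (x : E₁)
    (hg : DifferentiableAt ℝ g ((WithLp.equiv 2 (E₁ × E₂)).symm (x, c))) :
    HasGradientAt (fun u => g ((WithLp.equiv 2 (E₁ × E₂)).symm (u, c)))
      ((gradient g ((WithLp.equiv 2 (E₁ × E₂)).symm (x, c))).fst) x := by
  set z := (WithLp.equiv 2 (E₁ × E₂)).symm (x, c)
  have hgz : HasFDerivAt g (toDual ℝ _ (gradient g z)) z := hg.hasGradientAt
  have hiota : HasFDerivAt (fun u : E₁ => (WithLp.equiv 2 (E₁ × E₂)).symm (u, c))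
      (inclCLM : E₁ →L[ℝ] WithLp 2 (E₁ × E₂)) x := by
    have h0 : ∀ u : E₁, (WithLp.equiv 2 (E₁ × E₂)).symm (u, c)
        = inclCLM u + (WithLp.equiv 2 (E₁ × E₂)).symm (0, c) := by
      intro u
      rw [inclCLM_apply, WithLp.equiv_symm_apply, ← WithLp.toLp_add, Prod.mk_add_mk, add_zero, zero_add]
    have h1 : HasFDerivAt (fun u : E₁ => inclCLM u + (WithLp.equiv 2 (E₁ × E₂)).symm (0, c))
        (inclCLM : E₁ →L[ℝ] WithLp 2 (E₁ × E₂)) x :=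
      (inclCLM : E₁ →L[ℝ] WithLp 2 (E₁ × E₂)).hasFDerivAt.add_const _
    exact h1.congr_of_eventuallyEq (Filter.Eventually.of_forall h0)
  have hcomp := hgz.comp x hiota
  rw [hasGradientAt_iff_hasFDerivAt]
  refine hcomp.congr_fderiv ?_
  ext v
  show ⟪gradient g z, inclCLM v⟫ = ⟪(gradient g z).ofLp.1, v⟫
  rw [inclCLM_apply, WithLp.prod_inner_apply, WithLp.equiv_symm_apply, WithLp.ofLp_toLp,
    inner_zero_right, add_zero]

omit [CompleteSpace E₁] [CompleteSpace E₂] in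
lemma fst_norm_le' (z : WithLp 2 (E₁ × E₂)) : ‖z.fst‖ ≤ ‖z‖ := by
  have h := WithLp.prod_norm_sq_eq_of_L2 z
  nlinarith [norm_nonneg z, norm_nonneg z.fst, norm_nonneg z.snd, sq_nonneg (‖z‖ + ‖z.fst‖)]

omit [CompleteSpace E₁] [CompleteSpace E₂] in
lemma sum_fst' {ι : Type*} (s : Finset ι) (v : ι → WithLp 2 (E₁ × E₂)) :
    (∑ i ∈ s, v i).fst = ∑ i ∈ s, (v i).fst := by
  classical
  induction s using Finset.induction with
  | empty => rfl
  | insert _ _ h ih => simp [Finset.sum_insert h, WithLp.add_fst, ih]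

end Slice

set_option maxHeartbeats 1000000 in
/-- Lemma A.10 (block minimizer sensitivity). On the L²-product `E₁ × E₂`, let each `f j` be
differentiable with `L j`-Lipschitz gradient, `h` differentiable with `L_h`-Lipschitz gradient,
and assume `f := (1/J)∑ⱼ fⱼ + h` is `μ`-strongly convex. If `x₁*` minimizes
`x₁ ↦ (1/J)∑ⱼ fⱼ(x₁, x₂ʲ) + h(x₁, x₂⁰)` and `y₁*` minimizes the analogous map with the `y`
points, then `‖x₁* − y₁*‖` is bounded by the staleness of the second-block arguments. -/
theorem block_minimizer_sensitivity
    {E₁ E₂ : Type*} [NormedAddCommGroup E₁] [InnerProductSpace ℝ E₁] [CompleteSpace E₁]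
    [NormedAddCommGroup E₂] [InnerProductSpace ℝ E₂] [CompleteSpace E₂]
    (J : ℕ) (hJ : 0 < J)
    (f : Fin J → WithLp 2 (E₁ × E₂) → ℝ) (L : Fin J → ℝ) (hL : ∀ j, 0 < L j)
    (hfdiff : ∀ j, Differentiable ℝ (f j))
    (hflip : ∀ (j : Fin J) (z z' : WithLp 2 (E₁ × E₂)),
      ‖gradient (f j) z - gradient (f j) z'‖ ≤ L j * ‖z - z'‖)
    (h : WithLp 2 (E₁ × E₂) → ℝ) (Lh : ℝ) (hLh : 0 < Lh)
    (hhdiff : Differentiable ℝ h)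
    (hhlip : ∀ z z' : WithLp 2 (E₁ × E₂),
      ‖gradient h z - gradient h z'‖ ≤ Lh * ‖z - z'‖)
    (F : WithLp 2 (E₁ × E₂) → ℝ)
    (hF : F = fun z => (1 / (J : ℝ)) * ∑ j, f j z + h z)
    (μ : ℝ) (hμ : 0 < μ)
    (hstrong : ∀ z z' : WithLp 2 (E₁ × E₂),
      F z' ≥ F z + ⟪gradient F z, z' - z⟫ + μ / 2 * ‖z' - z‖ ^ 2)
    (Lbar : ℝ) (hLbar : Lbar = (1 / (J : ℝ)) * ∑ j, L j)
    (x₂ : Fin J → E₂) (x₂0 : E₂) (y₂ : Fin J → E₂) (y₂0 : E₂)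
    (xstar ystar : E₁)
    (hx : ∀ x₁ : E₁,
      (1 / (J : ℝ)) * ∑ j, f j ((WithLp.equiv 2 (E₁ × E₂)).symm (xstar, x₂ j))
          + h ((WithLp.equiv 2 (E₁ × E₂)).symm (xstar, x₂0))
        ≤ (1 / (J : ℝ)) * ∑ j, f j ((WithLp.equiv 2 (E₁ × E₂)).symm (x₁, x₂ j))
          + h ((WithLp.equiv 2 (E₁ × E₂)).symm (x₁, x₂0)))
    (hy : ∀ y₁ : E₁,
      (1 / (J : ℝ)) * ∑ j, f j ((WithLp.equiv 2 (E₁ × E₂)).symm (ystar, y₂ j))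
          + h ((WithLp.equiv 2 (E₁ × E₂)).symm (ystar, y₂0))
        ≤ (1 / (J : ℝ)) * ∑ j, f j ((WithLp.equiv 2 (E₁ × E₂)).symm (y₁, y₂ j))
          + h ((WithLp.equiv 2 (E₁ × E₂)).symm (y₁, y₂0))) :
    ‖xstar - ystar‖ ≤
      1 / μ * ((1 / (J : ℝ)) * ∑ j, L j * (‖x₂ j - x₂0‖ + ‖y₂ j - y₂0‖))
        + 1 / μ * (Lh + Lbar) * ‖x₂0 - y₂0‖ := by
  classical
  set e : E₁ × E₂ → WithLp 2 (E₁ × E₂) := ⇑(WithLp.equiv 2 (E₁ × E₂)).symm with he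
  set cJ : ℝ := 1 / (J : ℝ) with hcJ
  have hJpos : (0 : ℝ) < (J : ℝ) := by exact_mod_cast hJ
  have hcJpos : 0 < cJ := by positivity
  -- gradient of F
  have hFgrad : ∀ z, HasGradientAt F
      (cJ • ∑ j, gradient (f j) z + gradient h z) z := by
    intro z
    rw [hF]
    exact hga_add' (hga_const_mul' cJ (hga_sum' Finset.univ
      (fun j _ => ((hfdiff j) z).hasGradientAt))) ((hhdiff z).hasGradientAt)
  have hFgrad_eq : ∀ z, gradient F z = cJ • ∑ j, gradient (f j) z + gradient h z :=
    fun z => (hFgrad z).gradient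
  -- Lipschitz bound for gradient of F
  have hFlip : ∀ z z', ‖gradient F z - gradient F z'‖ ≤ (Lbar + Lh) * ‖z - z'‖ := by
    intro z z'
    rw [hFgrad_eq z, hFgrad_eq z']
    have key : cJ • ∑ j, gradient (f j) z + gradient h z
        - (cJ • ∑ j, gradient (f j) z' + gradient h z')
        = cJ • ∑ j, (gradient (f j) z - gradient (f j) z')
          + (gradient h z - gradient h z') := by
      rw [Finset.sum_sub_distrib, smul_sub]; abel
    rw [key]
    calc ‖cJ • ∑ j, (gradient (f j) z - gradient (f j) z')
          + (gradient h z - gradient h z')‖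
        ≤ ‖cJ • ∑ j, (gradient (f j) z - gradient (f j) z')‖
          + ‖gradient h z - gradient h z'‖ := norm_add_le _ _
      _ ≤ cJ * ∑ j, (L j * ‖z - z'‖) + Lh * ‖z - z'‖ := by
          have hA : ‖cJ • ∑ j, (gradient (f j) z - gradient (f j) z')‖
              ≤ cJ * ∑ j, (L j * ‖z - z'‖) := by
            rw [norm_smul, Real.norm_eq_abs, abs_of_pos hcJpos]
            have hB : ‖∑ j, (gradient (f j) z - gradient (f j) z')‖
                ≤ ∑ j, (L j * ‖z - z'‖) :=
              (norm_sum_le _ _).trans (Finset.sum_le_sum fun j _ => hflip j z z')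
            exact mul_le_mul_of_nonneg_left hB hcJpos.le
          exact add_le_add hA (hhlip z z')
      _ = (Lbar + Lh) * ‖z - z'‖ := by
          rw [hLbar, ← Finset.sum_mul]; ring
  -- optimality conditions
  have hxopt : cJ • (∑ j, (gradient (f j) (e (xstar, x₂ j))).fst)
      + (gradient h (e (xstar, x₂0))).fst = 0 := by
    have hmin : IsLocalMin (fun u : E₁ => cJ * ∑ j, f j (e (u, x₂ j)) + h (e (u, x₂0)))
        xstar := Filter.Eventually.of_forall (fun u => hx u)
    have hg : HasGradientAt (fun u : E₁ => cJ * ∑ j, f j (e (u, x₂ j)) + h (e (u, x₂0)))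
        (cJ • (∑ j, (gradient (f j) (e (xstar, x₂ j))).fst)
          + (gradient h (e (xstar, x₂0))).fst) xstar :=
      hga_add' (hga_const_mul' cJ (hga_sum' Finset.univ
        (fun j _ => hga_slice (x₂ j) xstar ((hfdiff j) _))))
        (hga_slice x₂0 xstar (hhdiff _))
    have h0 := hmin.hasFDerivAt_eq_zero hg
    simpa using congrArg (toDual ℝ E₁).symm h0
  have hyopt : cJ • (∑ j, (gradient (f j) (e (ystar, y₂ j))).fst)
      + (gradient h (e (ystar, y₂0))).fst = 0 := by
    have hmin : IsLocalMin (fun u : E₁ => cJ * ∑ j, f j (e (u, y₂ j)) + h (e (u, y₂0)))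
        ystar := Filter.Eventually.of_forall (fun u => hy u)
    have hg : HasGradientAt (fun u : E₁ => cJ * ∑ j, f j (e (u, y₂ j)) + h (e (u, y₂0)))
        (cJ • (∑ j, (gradient (f j) (e (ystar, y₂ j))).fst)
          + (gradient h (e (ystar, y₂0))).fst) ystar :=
      hga_add' (hga_const_mul' cJ (hga_sum' Finset.univ
        (fun j _ => hga_slice (y₂ j) ystar ((hfdiff j) _))))
        (hga_slice y₂0 ystar (hhdiff _))
    have h0 := hmin.hasFDerivAt_eq_zero hg
    simpa using congrArg (toDual ℝ E₁).symm h0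
  -- names
  set zx : WithLp 2 (E₁ × E₂) := e (xstar, x₂0) with hzx
  set zy : WithLp 2 (E₁ × E₂) := e (ystar, x₂0) with hzy
  set wy : WithLp 2 (E₁ × E₂) := e (ystar, y₂0) with hwy
  set ax : E₁ := (gradient F zx).fst with hax
  set ay : E₁ := (gradient F zy).fst with hay2
  set by' : E₁ := (gradient F wy).fst with hby2
  set d : E₁ := xstar - ystar with hd
  -- difference formulas
  have hzyzx : zy - zx = e (ystar - xstar, 0) := by
    rw [hzy, hzx, he, WithLp.equiv_symm_apply, ← WithLp.toLp_sub, Prod.mk_sub_mk, sub_self]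
  have hzxzy : zx - zy = e (xstar - ystar, 0) := by
    rw [hzy, hzx, he, WithLp.equiv_symm_apply, ← WithLp.toLp_sub, Prod.mk_sub_mk, sub_self]
  have hzywy : zy - wy = e (0, x₂0 - y₂0) := by
    rw [hzy, hwy, he, WithLp.equiv_symm_apply, ← WithLp.toLp_sub, Prod.mk_sub_mk, sub_self]
  -- monotonicity
  have hmono : μ * ‖d‖ ^ 2 ≤ ⟪ax - ay, d⟫ := by
    have h1 := hstrong zx zy
    have h2 := hstrong zy zx
    have e1 : ⟪gradient F zx, zy - zx⟫ = -⟪ax, d⟫ := by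
      rw [hzyzx, WithLp.prod_inner_apply]
      simp only [he, WithLp.equiv_symm_apply, WithLp.ofLp_toLp, inner_zero_right, add_zero]
      rw [hd, ← inner_neg_right, neg_sub]
      rfl
    have e2 : ⟪gradient F zy, zx - zy⟫ = ⟪ay, d⟫ := by
      rw [hzxzy, WithLp.prod_inner_apply]
      simp only [he, WithLp.equiv_symm_apply, WithLp.ofLp_toLp, inner_zero_right, add_zero]
      rfl
    have n1 : ‖zy - zx‖ = ‖d‖ := by
      rw [hzyzx, he, WithLp.equiv_symm_apply, WithLp.norm_toLp_fst, hd, norm_sub_rev]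
    have n2 : ‖zx - zy‖ = ‖d‖ := by
      rw [hzxzy, he, WithLp.equiv_symm_apply, WithLp.norm_toLp_fst, hd]
    rw [inner_sub_left]
    rw [e1, n1] at h1
    rw [e2, n2] at h2
    linarith
  -- bound ‖ax‖
  have haxb : ‖ax‖ ≤ cJ * ∑ j, L j * ‖x₂ j - x₂0‖ := by
    have heq : ax = cJ • ∑ j, ((gradient (f j) zx).fst
        - (gradient (f j) (e (xstar, x₂ j))).fst) := by
      rw [hax, hFgrad_eq zx, WithLp.add_fst, WithLp.smul_fst, sum_fst',
        Finset.sum_sub_distrib, smul_sub]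
      have : cJ • ∑ j, (gradient (f j) (e (xstar, x₂ j))).fst
          = - (gradient h zx).fst := by
        rw [eq_neg_iff_add_eq_zero]; exact hxopt
      rw [this]; abel
    rw [heq, norm_smul, Real.norm_eq_abs, abs_of_pos hcJpos]
    gcongr
    calc ‖∑ j, ((gradient (f j) zx).fst - (gradient (f j) (e (xstar, x₂ j))).fst)‖
        ≤ ∑ j, ‖(gradient (f j) zx).fst - (gradient (f j) (e (xstar, x₂ j))).fst‖ :=
          norm_sum_le _ _
      _ ≤ ∑ j, L j * ‖x₂ j - x₂0‖ := by
          gcongr with j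
          have hsub : zx - e (xstar, x₂ j) = e (0, x₂0 - x₂ j) := by
            rw [hzx, he, WithLp.equiv_symm_apply, ← WithLp.toLp_sub, Prod.mk_sub_mk, sub_self]
          calc ‖(gradient (f j) zx).fst - (gradient (f j) (e (xstar, x₂ j))).fst‖
              = ‖(gradient (f j) zx - gradient (f j) (e (xstar, x₂ j))).fst‖ := by
                rw [WithLp.sub_fst]
            _ ≤ ‖gradient (f j) zx - gradient (f j) (e (xstar, x₂ j))‖ := fst_norm_le' _
            _ ≤ L j * ‖zx - e (xstar, x₂ j)‖ := hflip j _ _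
            _ = L j * ‖x₂ j - x₂0‖ := by
                rw [hsub, he, WithLp.equiv_symm_apply, WithLp.norm_toLp_snd, norm_sub_rev]
  -- bound ‖by'‖
  have hbyb : ‖by'‖ ≤ cJ * ∑ j, L j * ‖y₂ j - y₂0‖ := by
    have heq : by' = cJ • ∑ j, ((gradient (f j) wy).fst
        - (gradient (f j) (e (ystar, y₂ j))).fst) := by
      rw [hby2, hFgrad_eq wy, WithLp.add_fst, WithLp.smul_fst, sum_fst',
        Finset.sum_sub_distrib, smul_sub]
      have : cJ • ∑ j, (gradient (f j) (e (ystar, y₂ j))).fst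
          = - (gradient h wy).fst := by
        rw [eq_neg_iff_add_eq_zero]; exact hyopt
      rw [this]; abel
    rw [heq, norm_smul, Real.norm_eq_abs, abs_of_pos hcJpos]
    gcongr
    calc ‖∑ j, ((gradient (f j) wy).fst - (gradient (f j) (e (ystar, y₂ j))).fst)‖
        ≤ ∑ j, ‖(gradient (f j) wy).fst - (gradient (f j) (e (ystar, y₂ j))).fst‖ :=
          norm_sum_le _ _
      _ ≤ ∑ j, L j * ‖y₂ j - y₂0‖ := by
          gcongr with j
          have hsub : wy - e (ystar, y₂ j) = e (0, y₂0 - y₂ j) := by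
            rw [hwy, he, WithLp.equiv_symm_apply, ← WithLp.toLp_sub, Prod.mk_sub_mk, sub_self]
          calc ‖(gradient (f j) wy).fst - (gradient (f j) (e (ystar, y₂ j))).fst‖
              = ‖(gradient (f j) wy - gradient (f j) (e (ystar, y₂ j))).fst‖ := by
                rw [WithLp.sub_fst]
            _ ≤ ‖gradient (f j) wy - gradient (f j) (e (ystar, y₂ j))‖ := fst_norm_le' _
            _ ≤ L j * ‖wy - e (ystar, y₂ j)‖ := hflip j _ _
            _ = L j * ‖y₂ j - y₂0‖ := by
                rw [hsub, he, WithLp.equiv_symm_apply, WithLp.norm_toLp_snd, norm_sub_rev]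
  -- bound ‖ay - by'‖
  have haybyb : ‖ay - by'‖ ≤ (Lbar + Lh) * ‖x₂0 - y₂0‖ := by
    calc ‖ay - by'‖ = ‖(gradient F zy - gradient F wy).fst‖ := by
          rw [WithLp.sub_fst]
      _ ≤ ‖gradient F zy - gradient F wy‖ := fst_norm_le' _
      _ ≤ (Lbar + Lh) * ‖zy - wy‖ := hFlip _ _
      _ = (Lbar + Lh) * ‖x₂0 - y₂0‖ := by
          rw [hzywy, he, WithLp.equiv_symm_apply, WithLp.norm_toLp_snd]
  -- combine
  have htri : ‖ax - ay‖ ≤ cJ * ∑ j, L j * ‖x₂ j - x₂0‖ + cJ * ∑ j, L j * ‖y₂ j - y₂0‖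
      + (Lbar + Lh) * ‖x₂0 - y₂0‖ := by
    have hrw : ax - ay = ax - (ay - by') - by' := by abel
    calc ‖ax - ay‖ = ‖ax - (ay - by') - by'‖ := by rw [← hrw]
      _ ≤ ‖ax - (ay - by')‖ + ‖by'‖ := norm_sub_le _ _
      _ ≤ ‖ax‖ + ‖ay - by'‖ + ‖by'‖ := by
          gcongr; exact norm_sub_le _ _
      _ ≤ cJ * ∑ j, L j * ‖x₂ j - x₂0‖ + (Lbar + Lh) * ‖x₂0 - y₂0‖
          + cJ * ∑ j, L j * ‖y₂ j - y₂0‖ := by gcongr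
      _ = _ := by ring
  have hsum_split : ∑ j, L j * (‖x₂ j - x₂0‖ + ‖y₂ j - y₂0‖)
      = (∑ j, L j * ‖x₂ j - x₂0‖) + ∑ j, L j * ‖y₂ j - y₂0‖ := by
    rw [← Finset.sum_add_distrib]
    exact Finset.sum_congr rfl (fun j _ => by ring)
  have hLbar0 : 0 ≤ Lbar := by
    rw [hLbar]
    have : 0 ≤ ∑ j, L j := Finset.sum_nonneg (fun j _ => (hL j).le)
    positivity
  by_cases hd0 : d = 0
  · rw [hd0, norm_zero]
    have h1 : 0 ≤ (1 / (J : ℝ)) * ∑ j, L j * (‖x₂ j - x₂0‖ + ‖y₂ j - y₂0‖) := by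
      apply mul_nonneg (by positivity)
      exact Finset.sum_nonneg (fun j _ => mul_nonneg (hL j).le (by positivity))
    have h2 : 0 ≤ 1 / μ * (Lh + Lbar) * ‖x₂0 - y₂0‖ := by
      apply mul_nonneg (mul_nonneg (by positivity) (by linarith))
      positivity
    exact add_nonneg (mul_nonneg (by positivity) h1) h2
  · have hdpos : 0 < ‖d‖ := norm_pos_iff.mpr hd0
    have hc : ⟪ax - ay, d⟫ ≤ ‖ax - ay‖ * ‖d‖ := real_inner_le_norm _ _
    have hmu : μ * ‖d‖ ≤ ‖ax - ay‖ := by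
      have := hmono.trans hc
      nlinarith
    have hfin : μ * ‖d‖ ≤ cJ * ∑ j, L j * ‖x₂ j - x₂0‖ + cJ * ∑ j, L j * ‖y₂ j - y₂0‖
        + (Lbar + Lh) * ‖x₂0 - y₂0‖ := hmu.trans htri
    rw [hsum_split]
    have hrhs : 1 / μ * ((1 / (J : ℝ)) * ((∑ j, L j * ‖x₂ j - x₂0‖) + ∑ j, L j * ‖y₂ j - y₂0‖))
        + 1 / μ * (Lh + Lbar) * ‖x₂0 - y₂0‖
        = (cJ * ∑ j, L j * ‖x₂ j - x₂0‖ + cJ * ∑ j, L j * ‖y₂ j - y₂0‖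
          + (Lbar + Lh) * ‖x₂0 - y₂0‖) / μ := by
      rw [hcJ]; field_simp; ring
    rw [hrhs, le_div_iff₀ hμ]
    nlinarith
end
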